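/- arXiv:1403.8139 — 3 statements merged into one kernel-verified Lean document; each statement's English description precedes it below -/
import Mathlib

section
/- Let λ = (λ_1,…,λ_n) be a weakly decreasing tuple of nonnegative integers and ρ_n = (n−1,…,1,0). Then, as an identity in the field of rational functions over ℚ in the variables q, x_1,…,x_n, one has ∏_{1≤i<j≤n}(x_i − q x_j) · s_λ(x) = Σ_{T ∈ SGT(λ+ρ_n)} (1−q)^{z(T)} (−q)^{l(T)} x^{m(T)}. -/
open MvPolynomial Finset

noncomputable section

abbrev R0 (n : ℕ) : Type := MvPolynomial (Option (Fin n)) ℚ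

/-- The field of rational functions over `ℚ` in `q, x_1, …, x_n`
(the variable `none` is `q`, and `some i` is `x_{i+1}`). -/
abbrev F0 (n : ℕ) : Type := FractionRing (R0 n)

def q0 (n : ℕ) : F0 n := algebraMap (R0 n) (F0 n) (X none)

def x0 (n : ℕ) (i : Fin n) : F0 n := algebraMap (R0 n) (F0 n) (X (some i))

/-- The action of `σ ∈ S_n` on `F0 n`, permuting `x_1, …, x_n` and fixing `q`. -/
def pact0 (n : ℕ) (σ : Equiv.Perm (Fin n)) : F0 n →+* F0 n :=
  IsFractionRing.lift
    (g := (algebraMap (R0 n) (F0 n)).comp (rename (Equiv.optionCongr σ)).toRingHom)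
    (by
      rw [RingHom.coe_comp]
      exact (IsFractionRing.injective (R0 n) (F0 n)).comp
        (rename_injective _ (Equiv.injective _)))

/-- `ρ_n`, 0-indexed: `rho n i = n - 1 - i`. -/
def rho (n : ℕ) : Fin n → ℕ := fun i => n - 1 - i.val

/-- The deformed Weyl denominator `Δ_n(c) = ∏_{i<j} (x_i - c x_j)`. -/
def Delta0 (n : ℕ) (c : F0 n) : F0 n :=
  ∏ i : Fin n, ∏ j ∈ Finset.Ioi i, (x0 n i - c * x0 n j)

/-- The Schur polynomial `s_λ(x) = Σ_σ σ(x^{λ+ρ}/Δ_n)`. -/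
def Schur0 (n : ℕ) (lam : Fin n → ℕ) : F0 n :=
  ∑ σ : Equiv.Perm (Fin n), pact0 n σ
    ((∏ i : Fin n, x0 n i ^ (lam i + rho n i)) / Delta0 n 1)

noncomputable section

/-- Extend a tuple `Fin n → ℕ` by zero to all of `ℕ`. -/
def pad {n : ℕ} (f : Fin n → ℕ) : ℕ → ℕ := fun k => if h : k < n then f ⟨k, h⟩ else 0

/-- A Gelfand–Tsetlin pattern with `n` rows (0-indexed): the entries `τ i j` for
`i ≤ j < n` form the triangular array; all other values are `0`. -/
structure GTP (n : ℕ) where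
  τ : ℕ → ℕ → ℕ
  supp : ∀ i j, n ≤ j ∨ j < i → τ i j = 0
  dec : ∀ i j, i ≤ j → j + 1 < n → τ i (j + 1) ≤ τ i j
  interUp : ∀ i j, 1 ≤ i → i ≤ j → j < n → τ i j ≤ τ (i - 1) (j - 1)
  interLow : ∀ i j, 1 ≤ i → i ≤ j → j < n → τ (i - 1) j ≤ τ i j

/-- A GT pattern is strict if every row is strictly decreasing. -/
def GTP.Strict {n : ℕ} (T : GTP n) : Prop :=
  ∀ i j, i ≤ j → j + 1 < n → T.τ i (j + 1) < T.τ i j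

/-- The top row of `T` is `α`. -/
def GTP.TopRow {n : ℕ} (T : GTP n) (α : Fin n → ℕ) : Prop := ∀ j, T.τ 0 j = pad α j

/-- `|r_i|`, the sum of the entries of row `i`. -/
def rowsum {n : ℕ} (T : GTP n) (i : ℕ) : ℕ := ∑ j ∈ Finset.range n, T.τ i j

/-- `m_i(T) = |r_i| - |r_{i+1}|` (0-indexed). -/
def mstat {n : ℕ} (T : GTP n) (i : ℕ) : ℕ := rowsum T i - rowsum T (i + 1)

/-- The number of left-leaning entries of `T`. -/
def lcount {n : ℕ} (T : GTP n) : ℕ :=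
  ((Finset.range n ×ˢ Finset.range n).filter
    (fun p => 1 ≤ p.1 ∧ p.1 ≤ p.2 ∧ T.τ p.1 p.2 = T.τ (p.1 - 1) (p.2 - 1))).card

/-- The number of special entries of `T`. -/
def zcount {n : ℕ} (T : GTP n) : ℕ :=
  ((Finset.range n ×ˢ Finset.range n).filter
    (fun p => 1 ≤ p.1 ∧ p.1 ≤ p.2 ∧ T.τ p.1 p.2 ≠ T.τ (p.1 - 1) (p.2 - 1) ∧
      T.τ p.1 p.2 ≠ T.τ (p.1 - 1) p.2)).card

/-- Row `i` of `T`, as a tuple of (declared) length `k`. -/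
def rowF {n : ℕ} (T : GTP n) (i : ℕ) (k : ℕ) : Fin k → ℕ := fun j => T.τ i (i + j.val)

/-- `Ω(α)`: the smallest set of tuples containing `α` and closed under
elementary raising moves. -/
inductive Omega : {k : ℕ} → (Fin k → ℕ) → (Fin k → ℕ) → Prop
  | base {k : ℕ} (α : Fin k → ℕ) : Omega α α
  | step {k : ℕ} (α β : Fin k → ℕ) (i : ℕ) (hi : i + 1 < k) (hb : Omega α β)
      (h2 : β ⟨i, by omega⟩ = β ⟨i + 1, hi⟩ + 2) :
      Omega α (Function.update (Function.update β ⟨i, by omega⟩ (β ⟨i, by omega⟩ - 1))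
        ⟨i + 1, hi⟩ (β ⟨i + 1, hi⟩ + 1))

/-- `l(β) = Σ_{i=1}^{k-1} ((α_1 + ⋯ + α_i) - (β_1 + ⋯ + β_i))`. -/
def ell {k : ℕ} (α β : Fin k → ℕ) : ℤ :=
  ∑ i ∈ Finset.range (k - 1),
    ((∑ j ∈ Finset.range (i + 1), (pad α j : ℤ)) - ∑ j ∈ Finset.range (i + 1), (pad β j : ℤ))


/-- `x^{m(T)} = x_1^{m_1(T)} ⋯ x_n^{m_n(T)}`. -/
def xm0 (n : ℕ) (T : GTP n) : F0 n :=
  ∏ i : Fin n, x0 n i ^ (rowsum T i.val - rowsum T (i.val + 1))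


set_option maxHeartbeats 1600000
set_option synthInstance.maxHeartbeats 400000

lemma algMap_inj (n : ℕ) : Function.Injective (algebraMap (R0 n) (F0 n)) :=
  IsFractionRing.injective _ _

lemma pact0_alg (n : ℕ) (σ : Equiv.Perm (Fin n)) (p : R0 n) :
    pact0 n σ (algebraMap (R0 n) (F0 n) p)
      = algebraMap (R0 n) (F0 n) (rename (Equiv.optionCongr σ) p) := by
  unfold pact0
  rw [IsFractionRing.lift_algebraMap]
  rfl

lemma pact0_x (n : ℕ) (σ : Equiv.Perm (Fin n)) (i : Fin n) :
    pact0 n σ (x0 n i) = x0 n (σ i) := by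
  rw [x0, pact0_alg, rename_X]; rfl

lemma pact0_q (n : ℕ) (σ : Equiv.Perm (Fin n)) :
    pact0 n σ (q0 n) = q0 n := by
  rw [q0, pact0_alg, rename_X]; rfl

-- nonvanishing via evaluation
lemma nz_of_eval {n : ℕ} (p : R0 n) (v : Option (Fin n) → ℚ)
    (h : MvPolynomial.eval v p ≠ 0) : algebraMap (R0 n) (F0 n) p ≠ 0 := by
  intro hc
  have : p = 0 := (map_eq_zero_iff _ (algMap_inj n)).mp hc
  rw [this] at h; simp at h

lemma x0_ne_zero (n : ℕ) (i : Fin n) : x0 n i ≠ 0 := by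
  apply nz_of_eval _ (fun v => if v = some i then 1 else 0)
  simp

lemma x0_sub_x0_ne (n : ℕ) {i j : Fin n} (h : i ≠ j) : x0 n i - x0 n j ≠ 0 := by
  rw [x0, x0, ← map_sub]
  apply nz_of_eval _ (fun v => if v = some i then 1 else 0)
  simp only [eval_sub, eval_X]
  simp [Option.some_inj, Ne.symm h]

lemma x0_sub_q_x0_ne (n : ℕ) (i j : Fin n) : x0 n i - q0 n * x0 n j ≠ 0 := by
  rw [x0, x0, q0, ← map_mul, ← map_sub]
  apply nz_of_eval _ (fun v => if v = some i then 1 else 0)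
  rcases eq_or_ne i j with rfl | h
  · simp
  · simp only [eval_sub, eval_mul, eval_X]
    simp [Option.some_inj, Ne.symm h]

lemma delta0_one_ne (n : ℕ) : Delta0 n 1 ≠ 0 := by
  unfold Delta0
  apply Finset.prod_ne_zero_iff.mpr
  intro i _
  apply Finset.prod_ne_zero_iff.mpr
  intro j hj
  simpa using x0_sub_x0_ne n (ne_of_lt (Finset.mem_Ioi.mp hj))

-- Delta as a Vandermonde-type determinant
lemma delta0_det (n : ℕ) :
    (Matrix.vandermonde (fun i => x0 n i)).det
      = (-1 : F0 n) ^ (∑ i : Fin n, (Finset.Ioi i).card) * Delta0 n 1 := by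
  rw [Matrix.det_vandermonde, Delta0, ← Finset.prod_pow_eq_pow_sum, ← Finset.prod_mul_distrib]
  congr 1; ext i
  rw [← Finset.prod_const, ← Finset.prod_mul_distrib]
  congr 1; ext j
  ring

lemma pact0_delta (n : ℕ) (σ : Equiv.Perm (Fin n)) :
    pact0 n σ (Delta0 n 1) = (Equiv.Perm.sign σ : ℤ) * Delta0 n 1 := by
  set W := (Matrix.vandermonde (fun i => x0 n i)).det with hW
  set c : F0 n := (-1 : F0 n) ^ (∑ i : Fin n, (Finset.Ioi i).card) with hc
  have hcc : c * c = 1 := by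
    rw [hc, ← pow_add, ← two_mul, pow_mul]; norm_num
  have hΔ : Delta0 n 1 = c * W := by
    rw [hW, delta0_det n, ← mul_assoc, ← hc, hcc, one_mul]
  have h1 : pact0 n σ W = ((Matrix.vandermonde (fun i => x0 n i)).submatrix σ id).det := by
    rw [hW, Matrix.det_vandermonde, map_prod]
    have : ∀ i : Fin n, pact0 n σ (∏ j ∈ Finset.Ioi i, (x0 n j - x0 n i))
        = ∏ j ∈ Finset.Ioi i, (x0 n (σ j) - x0 n (σ i)) := by
      intro i; rw [map_prod]; exact Finset.prod_congr rfl (fun j _ => by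
        rw [map_sub, pact0_x, pact0_x])
    rw [Finset.prod_congr rfl (fun i _ => this i),
      ← Matrix.det_vandermonde (fun i => x0 n (σ i))]
    congr 1
  have h2 := Matrix.det_permute σ (Matrix.vandermonde (fun i => x0 n i))
  have hcfix : pact0 n σ c = c := by
    rw [hc, map_pow, map_neg, map_one]
  rw [hΔ, map_mul, hcfix, h1, h2, ← hW]
  push_cast
  ring

def Alt (n : ℕ) (α : Fin n → ℕ) : F0 n :=
  (Matrix.of fun i j : Fin n => x0 n i ^ α j).det

lemma schur_alt (n : ℕ) (α : Fin n → ℕ) :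
    Delta0 n 1 * (∑ σ : Equiv.Perm (Fin n),
        pact0 n σ ((∏ i : Fin n, x0 n i ^ α i) / Delta0 n 1)) = Alt n α := by
  rw [Alt, Matrix.det_apply', Finset.mul_sum]
  refine Finset.sum_congr rfl fun σ _ => ?_
  rw [map_div₀, pact0_delta]
  have hnum : pact0 n σ (∏ i : Fin n, x0 n i ^ α i) = ∏ i : Fin n, x0 n (σ i) ^ α i := by
    rw [map_prod]; exact Finset.prod_congr rfl fun i _ => by rw [map_pow, pact0_x]
  have hsgn : ((Equiv.Perm.sign σ : ℤ) : F0 n) * ((Equiv.Perm.sign σ : ℤ) : F0 n) = 1 := by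
    rcases Int.units_eq_one_or (Equiv.Perm.sign σ) with h | h <;> rw [h] <;> norm_num
  rw [hnum]
  simp only [Matrix.of_apply]
  have hs : ((Equiv.Perm.sign σ : ℤ) : F0 n) ≠ 0 := by
    intro hc; rw [hc, zero_mul] at hsgn; exact zero_ne_one hsgn
  have hD := delta0_one_ne n
  field_simp
  linear_combination (-(∏ i : Fin n, x0 n (σ i) ^ α i)) * hsgn

-- shift hom
set_option maxHeartbeats 1000000 in
set_option synthInstance.maxHeartbeats 400000 in
def sh (n : ℕ) : F0 n →+* F0 (n + 1) :=
  IsFractionRing.lift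
    (g := (algebraMap (R0 (n+1)) (F0 (n+1))).comp
      (rename (Option.map Fin.succ)).toRingHom)
    (by
      rw [RingHom.coe_comp]
      exact (IsFractionRing.injective (R0 (n+1)) (F0 (n+1))).comp
        (rename_injective _ (Option.map_injective (Fin.succ_injective n))))

lemma sh_alg (n : ℕ) (p : R0 n) :
    sh n (algebraMap (R0 n) (F0 n) p)
      = algebraMap (R0 (n+1)) (F0 (n+1)) (rename (Option.map Fin.succ) p) := by
  unfold sh; rw [IsFractionRing.lift_algebraMap]; rfl

lemma sh_x (n : ℕ) (i : Fin n) : sh n (x0 n i) = x0 (n+1) i.succ := by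
  rw [x0, sh_alg, rename_X]; rfl

lemma sh_q (n : ℕ) : sh n (q0 n) = q0 (n+1) := by
  rw [q0, sh_alg, rename_X]; rfl

lemma delta0_succ (n : ℕ) (c' : F0 n) :
    Delta0 (n+1) (sh n c') =
      (∏ j : Fin n, (x0 (n+1) 0 - sh n c' * x0 (n+1) j.succ)) * sh n (Delta0 n c') := by
  rw [Delta0, Fin.prod_univ_succ]
  congr 1
  · rw [Fin.prod_Ioi_zero]
  · rw [Delta0, map_prod]
    refine Finset.prod_congr rfl fun i _ => ?_
    rw [Fin.prod_Ioi_succ, map_prod]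
    refine Finset.prod_congr rfl fun j _ => ?_
    rw [map_sub, map_mul, sh_x, sh_x]

-- finiteness
lemma GTP.ext' {n : ℕ} {T S : GTP n} (h : ∀ i j, T.τ i j = S.τ i j) : T = S := by
  cases T; cases S
  have : _ = _ := funext fun i => funext fun j => h i j
  simp only at this
  subst this
  rfl

lemma tau_le_bound {n : ℕ} (T : GTP n) (α : Fin n → ℕ) (hT : T.TopRow α) :
    ∀ i j, T.τ i j ≤ ∑ j' ∈ Finset.range n, pad α j' := by
  intro i
  induction i with
  | zero =>
    intro j
    by_cases hj : j < n
    · rw [hT j]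
      exact Finset.single_le_sum (f := fun j' => pad α j') (fun _ _ => Nat.zero_le _)
        (Finset.mem_range.mpr hj)
    · rw [T.supp 0 j (Or.inl (le_of_not_gt hj))]; exact Nat.zero_le _
  | succ i ih =>
    intro j
    by_cases hj : i + 1 ≤ j ∧ j < n
    · calc T.τ (i+1) j ≤ T.τ i (j-1) := by
            have := T.interUp (i+1) j (by omega) hj.1 hj.2
            simpa using this
        _ ≤ _ := ih (j-1)
    · rw [T.supp (i+1) j (by omega)]; exact Nat.zero_le _

instance sgtFinite (n : ℕ) (α : Fin n → ℕ) :
    Finite {T : GTP n // T.Strict ∧ T.TopRow α} := by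
  set b := ∑ j' ∈ Finset.range n, pad α j' with hb
  apply Finite.of_injective
    (f := fun T : {T : GTP n // T.Strict ∧ T.TopRow α} =>
      (fun i j : Fin n => (⟨T.1.τ i j, by
        have := tau_le_bound T.1 α T.2.2 i j; omega⟩ : Fin (b+1))))
  intro T S h
  apply Subtype.ext
  apply GTP.ext'
  intro i j
  by_cases hi : i < n
  · by_cases hj : j < n
    · have := congrFun (congrFun h ⟨i, hi⟩) ⟨j, hj⟩
      simpa [Fin.mk.injEq] using this
    · rw [T.1.supp i j (Or.inl (le_of_not_gt hj)), S.1.supp i j (Or.inl (le_of_not_gt hj))]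
  · by_cases hj : j < n
    · rw [T.1.supp i j (Or.inr (by omega)), S.1.supp i j (Or.inr (by omega))]
    · rw [T.1.supp i j (Or.inl (le_of_not_gt hj)), S.1.supp i j (Or.inl (le_of_not_gt hj))]

noncomputable instance sgtFintype (n : ℕ) (α : Fin n → ℕ) :
    Fintype {T : GTP n // T.Strict ∧ T.TopRow α} := Fintype.ofFinite _
/-- key telescoping identity -/
lemma tele {R : Type*} [CommRing R] (u v qq : R) : ∀ {A a : ℕ}, a < A →
    (u - v) * (∑ b ∈ Finset.Icc a A,
        (if b = A then -qq else if b = a then 1 else (1-qq)) * v ^ b * u ^ (A - b))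
      = (u - qq*v) * (v ^ a * u ^ (A - a) - v ^ A) := by
  intro A
  induction A with
  | zero => omega
  | succ A ih =>
    intro a h
    rcases Nat.lt_or_ge a A with hA | hA
    · have ih' := ih hA
      rw [Finset.sum_Icc_succ_top (by omega)]
      have hsplit : (∑ b ∈ Finset.Icc a A,
            (if b = A + 1 then -qq else if b = a then 1 else (1-qq)) * v ^ b * u ^ (A + 1 - b))
          = ∑ b ∈ Finset.Icc a A,
            (u * ((if b = A then -qq else if b = a then 1 else (1-qq)) * v ^ b * u ^ (A - b))
              + (if b = A then v ^ A * u else 0)) := by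
        refine Finset.sum_congr rfl fun b hb => ?_
        have hb' : a ≤ b ∧ b ≤ A := by simpa using hb
        have e1 : A + 1 - b = (A - b) + 1 := by omega
        rw [e1, pow_succ]
        by_cases h1 : b = A
        · subst h1
          rw [if_neg (by omega), if_neg (by omega), if_pos rfl, if_pos rfl,
            Nat.sub_self, pow_zero]
          ring
        · rw [if_neg (by omega), if_neg h1, if_neg h1]
          ring
      rw [hsplit, Finset.sum_add_distrib, Finset.sum_ite_eq' (Finset.Icc a A) A
        (fun _ => v ^ A * u), if_pos (by simp; omega), ← Finset.mul_sum]
      have e2 : A + 1 - (A + 1) = 0 := by omega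
      have e3 : A + 1 - a = (A - a) + 1 := by omega
      rw [if_pos rfl, e2, pow_zero, e3, pow_succ]
      linear_combination u * ih'
    · have : a = A := by omega
      subst this
      rw [Finset.sum_Icc_succ_top (by omega), Finset.Icc_self, Finset.sum_singleton]
      rw [if_neg (by omega), if_pos rfl, if_pos rfl,
        show a + 1 - a = 1 by omega, show a+1-(a+1) = 0 by omega, pow_zero]
      ring

section step
variable (n : ℕ) (α : Fin (n+1) → ℕ)

/-- coefficient for entry `b` in column `k` -/
def ff (k : Fin n) (b : ℕ) : F0 (n+1) :=
  if b = α k.castSucc then -(q0 (n+1)) else if b = α k.succ then 1 else 1 - q0 (n+1)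

def MatM : Matrix (Fin (n+1)) (Fin (n+1)) (F0 (n+1)) :=
  Matrix.of fun i j => x0 (n+1) i ^ α j

def MatU : Matrix (Fin (n+1)) (Fin (n+1)) (F0 (n+1)) :=
  Matrix.of fun j k => if j = k then 1
    else if (j:ℕ) + 1 = (k:ℕ) then -(x0 (n+1) 0 ^ α k / x0 (n+1) 0 ^ α j) else 0

def MatP : Matrix (Fin n) (Fin n) (F0 (n+1)) :=
  Matrix.of fun i k =>
    (∑ b ∈ Finset.Icc (α k.succ) (α k.castSucc),
        ff n α k b * x0 (n+1) i.succ ^ b * x0 (n+1) 0 ^ (α k.castSucc - b))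
      / x0 (n+1) 0 ^ (α k.castSucc - α k.succ)

lemma detU : (MatU n α).det = 1 := by
  rw [Matrix.det_of_upperTriangular (M := MatU n α) (by
    intro i j hji
    have hji' : (j:ℕ) < (i:ℕ) := by simpa using hji
    simp only [MatU, Matrix.of_apply]
    rw [if_neg (by rintro rfl; omega), if_neg (by omega)])]
  simp [MatU]

lemma MU_apply (i k : Fin (n+1)) :
    (MatM n α * MatU n α) i k =
      Fin.cases (x0 (n+1) i ^ α 0)
        (fun k' : Fin n => x0 (n+1) i ^ α k'.succ
          - x0 (n+1) i ^ α k'.castSucc * (x0 (n+1) 0 ^ α k'.succ / x0 (n+1) 0 ^ α k'.castSucc)) k := by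
  rw [Matrix.mul_apply]
  induction k using Fin.cases with
  | zero =>
    have : ∀ j : Fin (n+1), MatM n α i j * MatU n α j 0
        = if j = 0 then x0 (n+1) i ^ α 0 else 0 := by
      intro j
      simp only [MatM, MatU, Matrix.of_apply]
      by_cases hj : j = 0
      · subst hj; simp
      · rw [if_neg hj, if_neg (by simp), mul_zero, if_neg hj]
    rw [Finset.sum_congr rfl fun j _ => this j, Finset.sum_ite_eq' univ 0, if_pos (mem_univ _)]
    simp
  | succ k' =>
    have : ∀ j : Fin (n+1), MatM n α i j * MatU n α j k'.succ
        = (if j = k'.succ then x0 (n+1) i ^ α k'.succ else 0)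
          + (if j = k'.castSucc then
              -(x0 (n+1) i ^ α k'.castSucc * (x0 (n+1) 0 ^ α k'.succ / x0 (n+1) 0 ^ α k'.castSucc)) else 0) := by
      intro j
      simp only [MatM, MatU, Matrix.of_apply]
      by_cases h1 : j = k'.succ
      · subst h1
        rw [if_pos rfl, if_pos rfl, if_neg (by
          intro hc
          have := (Fin.castSucc_lt_succ : k'.castSucc < k'.succ)
          omega), mul_one]
        simp
      · rw [if_neg h1, if_neg h1]
        by_cases h2 : j = k'.castSucc
        · subst h2
          rw [if_pos rfl, if_pos (by simp), zero_add]
          ring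
        · rw [if_neg h2, if_neg (by
            intro hc
            apply h2
            have : (j : ℕ) = (k'.castSucc : ℕ) := by simp at hc ⊢; omega
            exact Fin.ext this), mul_zero, add_zero]
    rw [Finset.sum_congr rfl fun j _ => this j, Finset.sum_add_distrib,
      Finset.sum_ite_eq' univ k'.succ, Finset.sum_ite_eq' univ k'.castSucc,
      if_pos (mem_univ _), if_pos (mem_univ _)]
    simp only [Fin.cases_succ]
    ring


lemma MU_zero_succ (k' : Fin n) : (MatM n α * MatU n α) 0 k'.succ = 0 := by
  rw [MU_apply]
  simp only [Fin.cases_succ]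
  have h0 : x0 (n+1) 0 ^ α k'.castSucc ≠ 0 := pow_ne_zero _ (x0_ne_zero _ _)
  field_simp
  ring

lemma alt_det :
    Alt (n+1) α = x0 (n+1) 0 ^ α 0 *
      ((MatM n α * MatU n α).submatrix Fin.succ Fin.succ).det := by
  have h1 : Alt (n+1) α = (MatM n α * MatU n α).det := by
    rw [Matrix.det_mul, detU, mul_one]; rfl
  rw [h1, Matrix.det_succ_row_zero, Fin.sum_univ_succ]
  have hz : ∀ j : Fin n,
      (-1 : F0 (n+1)) ^ ((j.succ : Fin (n+1)) : ℕ) * (MatM n α * MatU n α) 0 j.succ *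
        ((MatM n α * MatU n α).submatrix Fin.succ j.succ.succAbove).det = 0 := by
    intro j
    rw [MU_zero_succ, mul_zero, zero_mul]
  rw [Finset.sum_congr rfl fun j _ => hz j, Finset.sum_const_zero, add_zero]
  have h00 : (MatM n α * MatU n α) 0 0 = x0 (n+1) 0 ^ α 0 := by
    rw [MU_apply]; rfl
  rw [h00, Fin.succAbove_zero]
  simp

lemma Nsub_eq (hα : ∀ k l : Fin (n+1), k < l → α l < α k) (i k : Fin n) :
    (MatM n α * MatU n α) i.succ k.succ
      = ((x0 (n+1) 0 - x0 (n+1) i.succ) / (x0 (n+1) 0 - q0 (n+1) * x0 (n+1) i.succ))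
        * MatP n α i k := by
  have hak : α k.succ < α k.castSucc := hα _ _ (Fin.castSucc_lt_succ : k.castSucc < k.succ)
  have key := tele (x0 (n+1) 0) (x0 (n+1) i.succ) (q0 (n+1)) hak
  rw [MU_apply]
  simp only [Fin.cases_succ]
  rw [MatP]
  simp only [Matrix.of_apply, ff]
  set S := ∑ b ∈ Finset.Icc (α k.succ) (α k.castSucc),
      (if b = α k.castSucc then -(q0 (n+1)) else if b = α k.succ then 1 else 1 - q0 (n+1))
        * x0 (n+1) i.succ ^ b * x0 (n+1) 0 ^ (α k.castSucc - b) with hS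
  have h0 : x0 (n+1) 0 ≠ 0 := x0_ne_zero _ _
  have h1 : x0 (n+1) 0 - q0 (n+1) * x0 (n+1) i.succ ≠ 0 := x0_sub_q_x0_ne _ _ _
  have h2 : x0 (n+1) 0 - x0 (n+1) i.succ ≠ 0 :=
    x0_sub_x0_ne _ (Ne.symm (Fin.succ_ne_zero i))
  have e3 : x0 (n+1) 0 ^ α k.castSucc
      = x0 (n+1) 0 ^ (α k.castSucc - α k.succ) * x0 (n+1) 0 ^ α k.succ := by
    rw [← pow_add]; congr 1; omega
  rw [e3]
  have hd : x0 (n+1) 0 ^ (α k.castSucc - α k.succ) ≠ 0 := pow_ne_zero _ h0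
  have ha : x0 (n+1) 0 ^ α k.succ ≠ 0 := pow_ne_zero _ h0
  have hgoal : ((x0 (n+1) 0 - x0 (n+1) i.succ) / (x0 (n+1) 0 - q0 (n+1) * x0 (n+1) i.succ))
      * (S / x0 (n+1) 0 ^ (α k.castSucc - α k.succ))
      = (x0 (n+1) i.succ ^ α k.succ * x0 (n+1) 0 ^ (α k.castSucc - α k.succ)
          - x0 (n+1) i.succ ^ α k.castSucc) / x0 (n+1) 0 ^ (α k.castSucc - α k.succ) := by
    rw [div_mul_div_comm, key]
    exact mul_div_mul_left _ _ h1
  rw [hgoal, sub_div, mul_div_cancel_right₀ _ hd]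
  congr 1
  rw [mul_comm (x0 (n+1) 0 ^ (α k.castSucc - α k.succ)) (x0 (n+1) 0 ^ α k.succ),
    div_mul_eq_div_div, div_self ha, one_div, div_eq_mul_inv]

def interB : Finset (Fin n → ℕ) :=
  (Fintype.piFinset fun k : Fin n => Finset.Icc (α k.succ) (α k.castSucc)).filter
    (fun r => ∀ k l : Fin n, k < l → r l < r k)

lemma detP_expand (hα : ∀ k l : Fin (n+1), k < l → α l < α k) :
    x0 (n+1) 0 ^ α 0 * (MatP n α).det
      = ∑ β ∈ interB n α, (∏ k : Fin n, ff n α k (β k))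
          * x0 (n+1) 0 ^ ((∑ j : Fin (n+1), α j) - ∑ k : Fin n, β k)
          * sh n (Alt n β) := by
  have h0 : x0 (n+1) 0 ≠ 0 := x0_ne_zero _ _
  -- rows of transpose as sums of scaled power vectors
  have hrow : ∀ k : Fin n, ((MatP n α).transpose k)
      = ∑ b ∈ Finset.Icc (α k.succ) (α k.castSucc),
          (ff n α k b * x0 (n+1) 0 ^ (α k.castSucc - b)
            / x0 (n+1) 0 ^ (α k.castSucc - α k.succ))
          • (fun i : Fin n => x0 (n+1) i.succ ^ b) := by
    intro k
    funext i
    rw [Finset.sum_apply]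
    simp only [Pi.smul_apply, smul_eq_mul]
    rw [Matrix.transpose_apply, MatP]
    simp only [Matrix.of_apply]
    rw [Finset.sum_div]
    exact Finset.sum_congr rfl fun b _ => by ring
  have hdet : (MatP n α).det = Matrix.detRowAlternating ((MatP n α).transpose) := by
    rw [← Matrix.det_transpose (MatP n α)]
    rfl
  rw [hdet]
  have hfn : ((MatP n α).transpose : Fin n → Fin n → F0 (n+1))
      = fun k => ∑ b ∈ Finset.Icc (α k.succ) (α k.castSucc),
          (ff n α k b * x0 (n+1) 0 ^ (α k.castSucc - b)
            / x0 (n+1) 0 ^ (α k.castSucc - α k.succ))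
          • (fun i : Fin n => x0 (n+1) i.succ ^ b) := funext hrow
  rw [hfn]
  have e1 : (Matrix.detRowAlternating (R := F0 (n+1)) (n := Fin n))
      (fun k => ∑ b ∈ Finset.Icc (α k.succ) (α k.castSucc),
        (ff n α k b * x0 (n+1) 0 ^ (α k.castSucc - b)
          / x0 (n+1) 0 ^ (α k.castSucc - α k.succ))
          • (fun i : Fin n => x0 (n+1) i.succ ^ b))
      = ∑ r ∈ Fintype.piFinset (fun k : Fin n => Finset.Icc (α k.succ) (α k.castSucc)),
          (Matrix.detRowAlternating (R := F0 (n+1)) (n := Fin n))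
            (fun k => (ff n α k (r k) * x0 (n+1) 0 ^ (α k.castSucc - r k)
              / x0 (n+1) 0 ^ (α k.castSucc - α k.succ))
              • (fun i : Fin n => x0 (n+1) i.succ ^ (r k))) :=
    MultilinearMap.map_sum_finset _ _ _
  rw [e1]
  have e2 : ∀ r : Fin n → ℕ, (Matrix.detRowAlternating (R := F0 (n+1)) (n := Fin n))
      (fun k => (ff n α k (r k) * x0 (n+1) 0 ^ (α k.castSucc - r k)
        / x0 (n+1) 0 ^ (α k.castSucc - α k.succ))
        • (fun i : Fin n => x0 (n+1) i.succ ^ (r k)))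
      = (∏ k : Fin n, (ff n α k (r k) * x0 (n+1) 0 ^ (α k.castSucc - r k)
          / x0 (n+1) 0 ^ (α k.castSucc - α k.succ)))
        • (Matrix.detRowAlternating (R := F0 (n+1)) (n := Fin n))
            (fun k => (fun i : Fin n => x0 (n+1) i.succ ^ (r k))) := fun r =>
    MultilinearMap.map_smul_univ _ _ _
  rw [Finset.sum_congr rfl fun r _ => e2 r]
  have hD : ∀ r : Fin n → ℕ, (Matrix.detRowAlternating (R := F0 (n+1)) (n := Fin n))
      (fun k => (fun i : Fin n => x0 (n+1) i.succ ^ (r k))) = sh n (Alt n r) := by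
    intro r
    have s1 : (Matrix.detRowAlternating (R := F0 (n+1)) (n := Fin n))
        (fun k => (fun i : Fin n => x0 (n+1) i.succ ^ (r k)))
        = (Matrix.of fun k i : Fin n => x0 (n+1) i.succ ^ (r k)).det := rfl
    have s2 : (Matrix.of fun k i : Fin n => x0 (n+1) i.succ ^ (r k))
        = (Matrix.of fun i k : Fin n => x0 (n+1) i.succ ^ (r k)).transpose := by
      ext i k; rfl
    rw [s1, s2, Matrix.det_transpose, Alt, RingHom.map_det]
    congr 1
    ext i k
    simp only [RingHom.mapMatrix_apply, Matrix.map_apply, Matrix.of_apply, map_pow, sh_x]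
  rw [Finset.sum_congr rfl fun r _ => by rw [hD r]]
  -- restrict to strictly decreasing r
  rw [interB, ← Finset.sum_filter_of_ne (p := fun r : Fin n → ℕ => ∀ k l : Fin n, k < l → r l < r k)
    (by
      intro r hr hne
      intro k l hkl
      by_contra hc
      apply hne
      have hmem := Fintype.mem_piFinset.mp hr
      have h1 : r l ≤ α l.castSucc := (Finset.mem_Icc.mp (hmem l)).2
      have h2 : α k.succ ≤ r k := (Finset.mem_Icc.mp (hmem k)).1
      have h3 : α l.castSucc ≤ α k.succ := by
        have hle : (k.succ : Fin (n+1)) ≤ l.castSucc := by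
          rw [Fin.le_def]
          simp only [Fin.val_succ, Fin.coe_castSucc]
          omega
        rcases lt_or_eq_of_le hle with h | h
        · exact le_of_lt (hα _ _ h)
        · rw [h]
      have hrr : r l = r k := by omega
      have hzz : (Matrix.detRowAlternating (R := F0 (n+1)) (n := Fin n))
          (fun k => (fun i : Fin n => x0 (n+1) i.succ ^ (r k))) = 0 := by
        exact AlternatingMap.map_eq_zero_of_eq _ _
          (by rw [hrr] : (fun i : Fin n => x0 (n+1) i.succ ^ (r l)) = (fun i : Fin n => x0 (n+1) i.succ ^ (r k)))
          (ne_of_gt hkl)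
      rw [hD r] at hzz
      rw [hzz, smul_zero])]
  rw [Finset.mul_sum]
  refine Finset.sum_congr rfl fun β hβ => ?_
  have hβ' := Finset.mem_filter.mp hβ
  have hmem := Fintype.mem_piFinset.mp hβ'.1
  have hβA : ∀ k : Fin n, β k ≤ α k.castSucc := fun k => (Finset.mem_Icc.mp (hmem k)).2
  have hβa : ∀ k : Fin n, α k.succ ≤ β k := fun k => (Finset.mem_Icc.mp (hmem k)).1
  have haA : ∀ k : Fin n, α k.succ ≤ α k.castSucc :=
    fun k => le_of_lt (hα _ _ (Fin.castSucc_lt_succ : k.castSucc < k.succ))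
  rw [smul_eq_mul]
  rw [Finset.prod_div_distrib, Finset.prod_mul_distrib,
    Finset.prod_pow_eq_pow_sum, Finset.prod_pow_eq_pow_sum]
  have hS1 : ∑ k : Fin n, (α k.castSucc - β k)
      = (∑ k : Fin n, α k.castSucc) - ∑ k : Fin n, β k :=
    Finset.sum_tsub_distrib _ (fun k _ => hβA k)
  have hS2 : ∑ k : Fin n, (α k.castSucc - α k.succ)
      = (∑ k : Fin n, α k.castSucc) - ∑ k : Fin n, α k.succ :=
    Finset.sum_tsub_distrib _ (fun k _ => haA k)
  have hsum : ∑ j : Fin (n+1), α j = α 0 + ∑ k : Fin n, α k.succ := Fin.sum_univ_succ α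
  have hsum2 : ∑ j : Fin (n+1), α j = (∑ k : Fin n, α k.castSucc) + α (Fin.last n) :=
    Fin.sum_univ_castSucc α
  have hm1 : ∑ k : Fin n, β k ≤ ∑ k : Fin n, α k.castSucc :=
    Finset.sum_le_sum (fun k _ => hβA k)
  have hm2 : ∑ k : Fin n, α k.succ ≤ ∑ k : Fin n, β k :=
    Finset.sum_le_sum (fun k _ => hβa k)
  have hE : α 0 + ∑ k : Fin n, (α k.castSucc - β k)
      = ((∑ j : Fin (n+1), α j) - ∑ k : Fin n, β k) + ∑ k : Fin n, (α k.castSucc - α k.succ) := by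
    omega
  have hd : x0 (n+1) 0 ^ (∑ k : Fin n, (α k.castSucc - α k.succ)) ≠ 0 :=
    pow_ne_zero _ h0
  field_simp
  have hpow : x0 (n+1) 0 ^ α 0 * x0 (n+1) 0 ^ (∑ k : Fin n, (α k.castSucc - β k))
      = x0 (n+1) 0 ^ ((∑ j : Fin (n+1), α j) - ∑ k : Fin n, β k)
        * x0 (n+1) 0 ^ (∑ k : Fin n, (α k.castSucc - α k.succ)) := by
    rw [← pow_add, ← pow_add, hE]
  linear_combination ((∏ x : Fin n, ff n α x (β x)) * sh n (Alt n β)) * hpow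

end step
section comb
variable {n : ℕ}

def tailGTP (T : GTP (n+1)) : GTP n where
  τ := fun i j => if n ≤ j ∨ j < i then 0 else T.τ (i+1) (j+1)
  supp := fun i j h => by rw [if_pos h]
  dec := by
    intro i j hij hj
    by_cases h2 : n ≤ j + 1 ∨ j + 1 < i
    · rw [if_pos h2]; exact Nat.zero_le _
    · rw [if_neg h2, if_neg (by omega)]
      have := T.dec (i+1) (j+1) (by omega) (by omega)
      exact this
  interUp := by
    intro i j hi hij hj
    by_cases h2 : n ≤ j ∨ j < i
    · rw [if_pos h2]; exact Nat.zero_le _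
    · rw [if_neg h2, if_neg (by omega)]
      have := T.interUp (i+1) (j+1) (by omega) (by omega) (by omega)
      rw [show i + 1 - 1 = i - 1 + 1 by omega, show j + 1 - 1 = j - 1 + 1 by omega] at this
      exact this
  interLow := by
    intro i j hi hij hj
    by_cases h2 : n ≤ j ∨ j < i
    · rw [if_pos h2, if_pos (by omega)]
    · rw [if_neg h2, if_neg (by omega)]
      have := T.interLow (i+1) (j+1) (by omega) (by omega) (by omega)
      rw [show i + 1 - 1 = i - 1 + 1 by omega] at this
      exact this

lemma tail_tau (T : GTP (n+1)) (i j : ℕ) : (tailGTP T).τ i j = T.τ (i+1) (j+1) := by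
  show (if n ≤ j ∨ j < i then 0 else T.τ (i+1) (j+1)) = _
  by_cases h : n ≤ j ∨ j < i
  · rw [if_pos h, T.supp (i+1) (j+1) (by omega)]
  · rw [if_neg h]

lemma tail_strict {T : GTP (n+1)} (hs : T.Strict) : (tailGTP T).Strict := by
  intro i j hij hj
  rw [tail_tau, tail_tau]
  exact hs (i+1) (j+1) (by omega) (by omega)

def secondRow (T : GTP (n+1)) : Fin n → ℕ := fun k => T.τ 1 (k.val + 1)

lemma tail_toprow (T : GTP (n+1)) : (tailGTP T).TopRow (secondRow T) := by
  intro j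
  rw [tail_tau, pad]
  by_cases h : j < n
  · rw [dif_pos h]; rfl
  · rw [dif_neg h, T.supp 1 (j+1) (by omega)]

def consGTP (α : Fin (n+1) → ℕ) (T' : GTP n)
    (hdec : ∀ j : ℕ, j + 1 < n + 1 → pad α (j+1) ≤ pad α j)
    (hup : ∀ j : ℕ, j < n → T'.τ 0 j ≤ pad α j)
    (hlow : ∀ j : ℕ, j < n → pad α (j+1) ≤ T'.τ 0 j) : GTP (n+1) where
  τ := fun i j => if i = 0 then pad α j else if n + 1 ≤ j ∨ j < i then 0 else T'.τ (i-1) (j-1)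
  supp := by
    intro i j h
    by_cases hi : i = 0
    · subst hi
      rw [if_pos rfl, pad, dif_neg (by omega)]
    · rw [if_neg hi, if_pos (by omega)]
  dec := by
    intro i j hij hj
    by_cases hi : i = 0
    · subst hi; rw [if_pos rfl, if_pos rfl]; exact hdec j hj
    · rw [if_neg hi, if_neg hi]
      by_cases h2 : n + 1 ≤ j + 1 ∨ j + 1 < i
      · rw [if_pos h2]; exact Nat.zero_le _
      · rw [if_neg h2, if_neg (by omega)]
        have := T'.dec (i-1) (j-1) (by omega) (by omega)
        have e1 : j - 1 + 1 = j := by omega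
        rw [e1] at this
        have e2 : j + 1 - 1 = j := by omega
        rw [e2]
        exact this
  interUp := by
    intro i j hi hij hj
    rw [if_neg (show ¬ (i = 0) by omega),
      if_neg (show ¬ (n + 1 ≤ j ∨ j < i) by omega)]
    by_cases hi1 : i = 1
    · subst hi1
      rw [if_pos (show 1 - 1 = 0 by omega)]
      have := hup (j-1) (by omega)
      simpa using this
    · rw [if_neg (show ¬ (i - 1 = 0) by omega),
        if_neg (show ¬ (n + 1 ≤ j - 1 ∨ j - 1 < i - 1) by omega)]
      exact T'.interUp (i-1) (j-1) (by omega) (by omega) (by omega)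
  interLow := by
    intro i j hi hij hj
    by_cases hi1 : i = 1
    · subst hi1
      rw [if_pos (show 1 - 1 = 0 by omega),
        if_neg (show ¬ ((1:ℕ) = 0) by omega),
        if_neg (show ¬ (n + 1 ≤ j ∨ j < 1) by omega)]
      have := hlow (j-1) (by omega)
      rw [show j - 1 + 1 = j by omega] at this
      simpa using this
    · rw [if_neg (show ¬ (i - 1 = 0) by omega),
        if_neg (show ¬ (n + 1 ≤ j ∨ j < i - 1) by omega),
        if_neg (show ¬ (i = 0) by omega),
        if_neg (show ¬ (n + 1 ≤ j ∨ j < i) by omega)]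
      exact T'.interLow (i-1) (j-1) (by omega) (by omega) (by omega)

lemma cons_tau_zero (α : Fin (n+1) → ℕ) (T' : GTP n) (h1 h2 h3) (j : ℕ) :
    (consGTP α T' h1 h2 h3).τ 0 j = pad α j := rfl

lemma cons_tau_succ (α : Fin (n+1) → ℕ) (T' : GTP n) (h1 h2 h3) (i j : ℕ) :
    (consGTP α T' h1 h2 h3).τ (i+1) (j+1) = T'.τ i j := by
  show (if i + 1 = 0 then pad α (j+1)
    else if n + 1 ≤ j + 1 ∨ j + 1 < i + 1 then 0 else T'.τ (i+1-1) (j+1-1)) = _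
  rw [if_neg (by omega)]
  by_cases h : n + 1 ≤ j + 1 ∨ j + 1 < i + 1
  · rw [if_pos h, T'.supp i j (by omega)]
  · rw [if_neg h, show i + 1 - 1 = i by omega, show j + 1 - 1 = j by omega]

lemma cons_toprow (α : Fin (n+1) → ℕ) (T' : GTP n) (h1 h2 h3) :
    (consGTP α T' h1 h2 h3).TopRow α := fun _ => rfl


lemma pad_castSucc (α : Fin (n+1) → ℕ) (k : Fin n) : pad α k.val = α k.castSucc := by
  rw [pad, dif_pos (show (k:ℕ) < n+1 by omega)]
  congr 1

lemma pad_succ (α : Fin (n+1) → ℕ) (k : Fin n) : pad α (k.val + 1) = α k.succ := by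
  rw [pad, dif_pos (show (k:ℕ) + 1 < n+1 by omega)]
  congr 1

lemma pad_fin {m : ℕ} (α : Fin m → ℕ) (k : Fin m) : pad α k.val = α k := by
  rw [pad, dif_pos k.isLt]

lemma strict_row {m : ℕ} {T : GTP m} (hs : T.Strict) {i j j' : ℕ}
    (hij : i ≤ j) (hjj : j < j') (hj' : j' < m) : T.τ i j' < T.τ i j := by
  induction j' with
  | zero => omega
  | succ j' ih =>
    rcases Nat.lt_or_ge j j' with h | h
    · exact lt_trans (hs i j' (by omega) (by omega)) (ih h (by omega))
    · have : j = j' := by omega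
      subst this
      exact hs i j hij hj'

lemma cons_strict (α : Fin (n+1) → ℕ) (T' : GTP n) (h1 h2 h3)
    (hsd : ∀ j : ℕ, j + 1 < n + 1 → pad α (j+1) < pad α j) (hT' : T'.Strict) :
    (consGTP α T' h1 h2 h3).Strict := by
  intro i j hij hj
  cases i with
  | zero =>
    rw [cons_tau_zero, cons_tau_zero]
    exact hsd j hj
  | succ i =>
    have hj1 : 1 ≤ j := by omega
    rw [cons_tau_succ]
    rw [show j = (j - 1) + 1 by omega, cons_tau_succ]
    have := hT' i (j-1) (by omega) (by omega)
    rw [show j - 1 + 1 = j by omega] at this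
    rw [show j - 1 + 1 = j by omega]
    exact this

lemma cons_tail {α : Fin (n+1) → ℕ} {T : GTP (n+1)} (htop : T.TopRow α) {h1 h2 h3} :
    consGTP α (tailGTP T) h1 h2 h3 = T := by
  apply GTP.ext'
  intro i j
  cases i with
  | zero => rw [cons_tau_zero, htop]
  | succ i =>
    cases j with
    | zero =>
      rw [(consGTP α (tailGTP T) h1 h2 h3).supp (i+1) 0 (by omega),
        T.supp (i+1) 0 (by omega)]
    | succ j => rw [cons_tau_succ, tail_tau]

lemma tail_cons (α : Fin (n+1) → ℕ) (T' : GTP n) {h1 h2 h3} :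
    tailGTP (consGTP α T' h1 h2 h3) = T' := by
  apply GTP.ext'
  intro i j
  rw [tail_tau, cons_tau_succ]

lemma secondRow_cons {α : Fin (n+1) → ℕ} {β : Fin n → ℕ} {T' : GTP n}
    (htop : T'.TopRow β) {h1 h2 h3} :
    secondRow (consGTP α T' h1 h2 h3) = β := by
  funext k
  show (consGTP α T' h1 h2 h3).τ 1 (k.val + 1) = β k
  have h := cons_tau_succ α T' h1 h2 h3 0 k.val
  norm_num at h
  rw [h, htop, pad_fin]

lemma secondRow_le {α : Fin (n+1) → ℕ} {T : GTP (n+1)} (htop : T.TopRow α) (k : Fin n) :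
    secondRow T k ≤ α k.castSucc := by
  have := T.interUp 1 (k.val+1) le_rfl (by omega) (by omega)
  rw [show (1:ℕ) - 1 = 0 by rfl, show (k.val+1) - 1 = k.val by omega, htop, pad_castSucc] at this
  exact this

lemma le_secondRow {α : Fin (n+1) → ℕ} {T : GTP (n+1)} (htop : T.TopRow α) (k : Fin n) :
    α k.succ ≤ secondRow T k := by
  have := T.interLow 1 (k.val+1) le_rfl (by omega) (by omega)
  rw [show (1:ℕ) - 1 = 0 by rfl, htop, pad_succ] at this
  exact this

lemma secondRow_strict {T : GTP (n+1)} (hs : T.Strict) {k l : Fin n} (hkl : k < l) :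
    secondRow T l < secondRow T k :=
  strict_row hs (by omega) (by omega : (k:ℕ)+1 < (l:ℕ)+1) (by omega)


-- ==== stage 4c ====
end comb

def wt (n : ℕ) (T : GTP n) : F0 n :=
  (1 - q0 n) ^ zcount T * (-q0 n) ^ lcount T * xm0 n T

section comb2
variable {n : ℕ} {α : Fin (n+1) → ℕ}

def zrow (α : Fin (n+1) → ℕ) (β : Fin n → ℕ) : ℕ :=
  (Finset.univ.filter fun k : Fin n => β k ≠ α k.castSucc ∧ β k ≠ α k.succ).card
def lrow (α : Fin (n+1) → ℕ) (β : Fin n → ℕ) : ℕ :=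
  (Finset.univ.filter fun k : Fin n => β k = α k.castSucc).card

lemma rowsum_zero {m : ℕ} {T : GTP m} {γ : Fin m → ℕ} (htop : T.TopRow γ) :
    rowsum T 0 = ∑ j : Fin m, γ j := by
  rw [rowsum, ← Fin.sum_univ_eq_sum_range (fun j => T.τ 0 j) m]
  refine Finset.sum_congr rfl fun j _ => ?_
  rw [htop, pad_fin]

lemma rowsum_tail (T : GTP (n+1)) (i : ℕ) : rowsum T (i+1) = rowsum (tailGTP T) i := by
  rw [rowsum, rowsum, Finset.sum_range_succ']
  rw [T.supp (i+1) 0 (by omega), add_zero]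
  exact Finset.sum_congr rfl fun j _ => (tail_tau T i j).symm

lemma rowsum_one {T : GTP (n+1)} : rowsum T 1 = ∑ k : Fin n, secondRow T k := by
  have h := rowsum_tail T 0
  norm_num at h
  rw [h, rowsum_zero (tail_toprow T)]

lemma xm0_split {T : GTP (n+1)} (htop : T.TopRow α) :
    xm0 (n+1) T = x0 (n+1) 0 ^ ((∑ j : Fin (n+1), α j) - ∑ k : Fin n, secondRow T k)
      * sh n (xm0 n (tailGTP T)) := by
  rw [xm0, Fin.prod_univ_succ]
  congr 1
  · rw [show ((0 : Fin (n+1)) : ℕ) = 0 from rfl]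
    rw [show (0:ℕ) + 1 = 1 from rfl, rowsum_zero htop, rowsum_one]
  · rw [xm0, map_prod]
    refine Finset.prod_congr rfl fun i _ => ?_
    rw [map_pow, sh_x]
    congr 1
    · rw [show ((i.succ : Fin (n+1)) : ℕ) = i.val + 1 from rfl]
      rw [rowsum_tail, rowsum_tail]


lemma iteEqIte {p q : Prop} [Decidable p] [Decidable q] (h : p ↔ q) {a b : ℕ} :
    (if p then a else b) = (if q then a else b) := if_congr h rfl rfl

lemma count_split (T : GTP (n+1)) (Q : ℕ → ℕ → ℕ → Prop) [DecidablePred fun p : ℕ×ℕ×ℕ => Q p.1 p.2.1 p.2.2]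
    [∀ a b c, Decidable (Q a b c)] :
    ((Finset.range (n+1) ×ˢ Finset.range (n+1)).filter
        (fun p => 1 ≤ p.1 ∧ p.1 ≤ p.2 ∧
          Q (T.τ p.1 p.2) (T.τ (p.1-1) (p.2-1)) (T.τ (p.1-1) p.2))).card
    = (∑ j ∈ Finset.range n, if Q (T.τ 1 (j+1)) (T.τ 0 j) (T.τ 0 (j+1)) then 1 else 0)
      + ((Finset.range n ×ˢ Finset.range n).filter
          (fun p => 1 ≤ p.1 ∧ p.1 ≤ p.2 ∧
            Q ((tailGTP T).τ p.1 p.2) ((tailGTP T).τ (p.1-1) (p.2-1))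
              ((tailGTP T).τ (p.1-1) p.2))).card := by
  rw [Finset.card_filter, Finset.card_filter, Finset.sum_product, Finset.sum_product]
  rw [Finset.sum_range_succ']
  have hzero : (∑ j ∈ Finset.range (n+1),
      if 1 ≤ (0:ℕ) ∧ 0 ≤ j ∧ Q (T.τ 0 j) (T.τ (0-1) (j-1)) (T.τ (0-1) j) then 1 else 0) = 0 :=
    Finset.sum_eq_zero fun j _ => by rw [if_neg (by omega)]
  rw [hzero, add_zero]
  have key : ∀ i ∈ Finset.range n,
      (∑ j ∈ Finset.range (n+1),
        if 1 ≤ i+1 ∧ i+1 ≤ j ∧ Q (T.τ (i+1) j) (T.τ (i+1-1) (j-1)) (T.τ (i+1-1) j) then 1 else 0)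
      = (if i = 0 then
          (∑ j ∈ Finset.range n, if Q (T.τ 1 (j+1)) (T.τ 0 j) (T.τ 0 (j+1)) then 1 else 0) else 0)
        + ∑ j ∈ Finset.range n,
            if 1 ≤ i ∧ i ≤ j ∧ Q ((tailGTP T).τ i j) ((tailGTP T).τ (i-1) (j-1))
              ((tailGTP T).τ (i-1) j) then 1 else 0 := by
    intro i _
    rw [Finset.sum_range_succ', if_neg (show ¬ (1 ≤ i+1 ∧ i+1 ≤ 0 ∧ _) by rintro ⟨-, h, -⟩; omega),
      add_zero]
    by_cases hi : i = 0
    · subst hi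
      rw [if_pos rfl]
      have h2 : (∑ j ∈ Finset.range n,
          if 1 ≤ (0:ℕ) ∧ 0 ≤ j ∧ Q ((tailGTP T).τ 0 j) ((tailGTP T).τ (0-1) (j-1))
            ((tailGTP T).τ (0-1) j) then 1 else 0) = 0 :=
        Finset.sum_eq_zero fun j _ => by rw [if_neg (by omega)]
      rw [h2, add_zero]
      refine Finset.sum_congr rfl fun j _ => ?_
      refine iteEqIte ?_
      simp only [Nat.add_sub_cancel, Nat.zero_add]
      constructor
      · rintro ⟨-, -, h⟩
        exact h
      · intro h
        exact ⟨le_rfl, by omega, h⟩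
    · rw [if_neg hi, zero_add]
      refine Finset.sum_congr rfl fun j _ => ?_
      by_cases hij : i ≤ j
      · have e1 : (tailGTP T).τ i j = T.τ (i+1) (j+1) := tail_tau T i j
        have e2 : (tailGTP T).τ (i-1) (j-1) = T.τ i j := by
          rw [tail_tau, show i - 1 + 1 = i by omega, show j - 1 + 1 = j by omega]
        have e3 : (tailGTP T).τ (i-1) j = T.τ i (j+1) := by
          rw [tail_tau, show i - 1 + 1 = i by omega]
        refine iteEqIte ?_
        rw [e1, e2, e3]
        simp only [Nat.add_sub_cancel]
        constructor
        · rintro ⟨-, -, h⟩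
          exact ⟨by omega, by omega, h⟩
        · rintro ⟨-, -, h⟩
          exact ⟨by omega, by omega, h⟩
      · rw [if_neg (by rintro ⟨-, h, -⟩; omega), if_neg (by rintro ⟨-, h, -⟩; omega)]
  rw [Finset.sum_congr rfl key, Finset.sum_add_distrib, Finset.sum_ite_eq' (Finset.range n) 0]
  rcases Nat.eq_zero_or_pos n with hn | hn
  · subst hn
    simp
  · rw [if_pos (Finset.mem_range.mpr hn)]


lemma zcount_split (T : GTP (n+1)) (htop : T.TopRow α) :
    zcount T = zrow α (secondRow T) + zcount (tailGTP T) := by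
  have h := count_split T (fun a b c => a ≠ b ∧ a ≠ c)
  have hrow : (∑ j ∈ Finset.range n,
      if (T.τ 1 (j+1) ≠ T.τ 0 j ∧ T.τ 1 (j+1) ≠ T.τ 0 (j+1)) then 1 else 0)
      = zrow α (secondRow T) := by
    rw [zrow, Finset.card_filter,
      ← Fin.sum_univ_eq_sum_range
        (fun j => if (T.τ 1 (j+1) ≠ T.τ 0 j ∧ T.τ 1 (j+1) ≠ T.τ 0 (j+1)) then 1 else 0) n]
    refine Finset.sum_congr rfl fun k _ => iteEqIte ?_
    rw [htop k.val, htop (k.val+1), pad_castSucc, pad_succ]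
    exact Iff.rfl
  rw [zcount, zcount, ← hrow]
  exact h

lemma lcount_split (T : GTP (n+1)) (htop : T.TopRow α) :
    lcount T = lrow α (secondRow T) + lcount (tailGTP T) := by
  have h := count_split T (fun a b c => a = b)
  have hrow : (∑ j ∈ Finset.range n, if (T.τ 1 (j+1) = T.τ 0 j) then 1 else 0)
      = lrow α (secondRow T) := by
    rw [lrow, Finset.card_filter,
      ← Fin.sum_univ_eq_sum_range (fun j => if (T.τ 1 (j+1) = T.τ 0 j) then 1 else 0) n]
    refine Finset.sum_congr rfl fun k _ => iteEqIte ?_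
    rw [htop k.val, pad_castSucc]
    exact Iff.rfl
  rw [lcount, lcount, ← hrow]
  exact h

lemma prod_ff (β : Fin n → ℕ) :
    (∏ k : Fin n, ff n α k (β k))
      = (1 - q0 (n+1)) ^ zrow α β * (-q0 (n+1)) ^ lrow α β := by
  have hpt : ∀ k : Fin n, ff n α k (β k)
      = (1 - q0 (n+1)) ^ (if β k ≠ α k.castSucc ∧ β k ≠ α k.succ then 1 else 0)
        * (-q0 (n+1)) ^ (if β k = α k.castSucc then 1 else 0) := by
    intro k
    by_cases h1 : β k = α k.castSucc
    · rw [ff, if_pos h1, if_neg (fun hc => hc.1 h1), if_pos h1]; simp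
    · by_cases h2 : β k = α k.succ
      · rw [ff, if_neg h1, if_pos h2, if_neg (fun hc => hc.2 h2), if_neg h1]; simp
      · rw [ff, if_neg h1, if_neg h2, if_pos ⟨h1, h2⟩, if_neg h1]; simp
  rw [Finset.prod_congr rfl fun k _ => hpt k, Finset.prod_mul_distrib,
    Finset.prod_pow_eq_pow_sum, Finset.prod_pow_eq_pow_sum]
  congr 1
  · congr 1
    rw [zrow, Finset.card_filter]
  · congr 1
    rw [lrow, Finset.card_filter]

lemma wt_split {T : GTP (n+1)} (htop : T.TopRow α) :
    wt (n+1) T = (∏ k : Fin n, ff n α k (secondRow T k))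
      * x0 (n+1) 0 ^ ((∑ j : Fin (n+1), α j) - ∑ k : Fin n, secondRow T k)
      * sh n (wt n (tailGTP T)) := by
  rw [wt, wt, zcount_split T htop, lcount_split T htop, xm0_split htop, prod_ff]
  rw [map_mul, map_mul, map_pow, map_pow, map_sub, map_one, sh_q, map_neg, sh_q]
  rw [pow_add, pow_add]
  ring


lemma secondRow_mem {T : GTP (n+1)} (hs : T.Strict) (htop : T.TopRow α) :
    secondRow T ∈ interB n α := by
  rw [interB, Finset.mem_filter]
  exact ⟨Fintype.mem_piFinset.mpr
      (fun k => Finset.mem_Icc.mpr ⟨le_secondRow htop k, secondRow_le htop k⟩),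
    fun k l hkl => secondRow_strict hs hkl⟩

lemma hdec_of (hα : ∀ k l : Fin (n+1), k < l → α l < α k) :
    ∀ j : ℕ, j + 1 < n + 1 → pad α (j+1) < pad α j := by
  intro j hj
  rw [pad, pad, dif_pos (by omega), dif_pos (by omega)]
  exact hα ⟨j, by omega⟩ ⟨j+1, by omega⟩ (Fin.mk_lt_mk.mpr (by omega))

lemma hup_of {β : Fin n → ℕ} (hβ : β ∈ interB n α) {T' : GTP n} (htop' : T'.TopRow β) :
    ∀ j : ℕ, j < n → T'.τ 0 j ≤ pad α j := by
  intro j hj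
  have hm := (Finset.mem_Icc.mp
    (Fintype.mem_piFinset.mp (Finset.mem_filter.mp hβ).1 ⟨j, hj⟩)).2
  calc T'.τ 0 j = β ⟨j, hj⟩ := by rw [htop' j, pad, dif_pos hj]
    _ ≤ α (⟨j, hj⟩ : Fin n).castSucc := hm
    _ = pad α j := (pad_castSucc α ⟨j, hj⟩).symm

lemma hlow_of {β : Fin n → ℕ} (hβ : β ∈ interB n α) {T' : GTP n} (htop' : T'.TopRow β) :
    ∀ j : ℕ, j < n → pad α (j+1) ≤ T'.τ 0 j := by
  intro j hj
  have hm := (Finset.mem_Icc.mp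
    (Fintype.mem_piFinset.mp (Finset.mem_filter.mp hβ).1 ⟨j, hj⟩)).1
  calc pad α (j+1) = α (⟨j, hj⟩ : Fin n).succ := pad_succ α ⟨j, hj⟩
    _ ≤ β ⟨j, hj⟩ := hm
    _ = T'.τ 0 j := by rw [htop' j, pad, dif_pos hj]

lemma pair_eq {P : (Fin n → ℕ) → Prop} [DecidablePred P]
    (x y : Σ β : {r : Fin n → ℕ // P r}, {T' : GTP n // T'.Strict ∧ T'.TopRow β.1})
    (h1 : x.1.1 = y.1.1) (h2 : x.2.1 = y.2.1) : x = y := by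
  obtain ⟨⟨βx, hx⟩, ⟨Tx, hTx⟩⟩ := x
  obtain ⟨⟨βy, hy⟩, ⟨Ty, hTy⟩⟩ := y
  simp only at h1 h2
  subst h1
  subst h2
  rfl

def combEquiv (hα : ∀ k l : Fin (n+1), k < l → α l < α k) :
    {T : GTP (n+1) // T.Strict ∧ T.TopRow α}
      ≃ (Σ β : {r : Fin n → ℕ // r ∈ interB n α},
          {T' : GTP n // T'.Strict ∧ T'.TopRow β.1}) where
  toFun T := ⟨⟨secondRow T.1, secondRow_mem T.2.1 T.2.2⟩,
    ⟨tailGTP T.1, tail_strict T.2.1, tail_toprow T.1⟩⟩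
  invFun x := ⟨consGTP α x.2.1 (fun j hj => le_of_lt (hdec_of hα j hj))
      (hup_of x.1.2 x.2.2.2) (hlow_of x.1.2 x.2.2.2),
    cons_strict α x.2.1 _ _ _ (hdec_of hα) x.2.2.1,
    cons_toprow α x.2.1 _ _ _⟩
  left_inv T := by
    apply Subtype.ext
    dsimp only
    exact cons_tail T.2.2
  right_inv x := by
    apply pair_eq
    · dsimp only
      exact secondRow_cons x.2.2.2
    · dsimp only
      exact tail_cons α x.2.1

lemma comb (hα : ∀ k l : Fin (n+1), k < l → α l < α k) :
    (∑ᶠ T : {T : GTP (n+1) // T.Strict ∧ T.TopRow α}, wt (n+1) T.1)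
      = ∑ β ∈ interB n α, (∏ k : Fin n, ff n α k (β k))
          * x0 (n+1) 0 ^ ((∑ j : Fin (n+1), α j) - ∑ k : Fin n, β k)
          * sh n (∑ᶠ T' : {T' : GTP n // T'.Strict ∧ T'.TopRow β}, wt n T'.1) := by
  rw [finsum_eq_sum_of_fintype]
  rw [Fintype.sum_equiv (combEquiv hα) _
    (fun x => (∏ k : Fin n, ff n α k (x.1.1 k))
      * x0 (n+1) 0 ^ ((∑ j : Fin (n+1), α j) - ∑ k : Fin n, x.1.1 k)
      * sh n (wt n x.2.1))
    (fun T => by exact wt_split T.2.2)]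
  rw [← Finset.univ_sigma_univ, Finset.sum_sigma]
  rw [← Finset.sum_coe_sort (interB n α)
    (fun b => (∏ k : Fin n, ff n α k (b k))
      * x0 (n+1) 0 ^ ((∑ j : Fin (n+1), α j) - ∑ k : Fin n, b k)
      * sh n (∑ᶠ T' : {T' : GTP n // T'.Strict ∧ T'.TopRow b}, wt n T'.1))]
  refine Finset.sum_congr rfl fun β _ => ?_
  rw [finsum_eq_sum_of_fintype, map_sum, Finset.mul_sum]

end comb2


section main

lemma gtp0_tau (T : GTP 0) (i j : ℕ) : T.τ i j = 0 := T.supp i j (Or.inl (Nat.zero_le j))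

def gtp0 : GTP 0 where
  τ := fun _ _ => 0
  supp := fun _ _ _ => rfl
  dec := fun _ _ _ _ => le_rfl
  interUp := fun _ _ _ _ _ => le_rfl
  interLow := fun _ _ _ _ _ => le_rfl

lemma main_ind : ∀ (n : ℕ) (α : Fin n → ℕ), (∀ k l : Fin n, k < l → α l < α k) →
    Delta0 n (q0 n) * Alt n α
      = Delta0 n 1 * ∑ᶠ T : {T : GTP n // T.Strict ∧ T.TopRow α}, wt n T.1 := by
  intro n
  induction n with
  | zero =>
    intro α _
    haveI : Unique {T : GTP 0 // T.Strict ∧ T.TopRow α} := by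
      refine ⟨⟨⟨gtp0, fun i j _ h => by omega, fun j => by
        show (0:ℕ) = pad α j
        rw [pad, dif_neg (by omega)]⟩⟩, ?_⟩
      rintro ⟨T, hT⟩
      apply Subtype.ext
      apply GTP.ext'
      intro i j
      rw [gtp0_tau T]
      exact (gtp0_tau _ i j).symm
    rw [finsum_unique]
    simp [Delta0, Alt, Matrix.det_fin_zero, wt, zcount, lcount, xm0]
  | succ n ih =>
    intro α hα
    have hPq : Delta0 (n+1) (q0 (n+1))
        = (∏ j : Fin n, (x0 (n+1) 0 - q0 (n+1) * x0 (n+1) j.succ)) * sh n (Delta0 n (q0 n)) := by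
      have h := delta0_succ n (q0 n)
      rw [sh_q] at h
      exact h
    have hP1 : Delta0 (n+1) (1 : F0 (n+1))
        = (∏ j : Fin n, (x0 (n+1) 0 - x0 (n+1) j.succ)) * sh n (Delta0 n 1) := by
      have h := delta0_succ n 1
      rw [map_one] at h
      simpa using h
    have hNsub : ((MatM n α * MatU n α).submatrix Fin.succ Fin.succ)
        = Matrix.of (fun i k => ((x0 (n+1) 0 - x0 (n+1) i.succ)
            / (x0 (n+1) 0 - q0 (n+1) * x0 (n+1) i.succ)) * MatP n α i k) := by
      ext i k
      exact Nsub_eq n α hα i k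
    have hAlt : Alt (n+1) α = x0 (n+1) 0 ^ α 0 *
        ((∏ i : Fin n, ((x0 (n+1) 0 - x0 (n+1) i.succ)
          / (x0 (n+1) 0 - q0 (n+1) * x0 (n+1) i.succ))) * (MatP n α).det) := by
      rw [alt_det n α, hNsub, Matrix.det_mul_column]
    have hrat : (∏ j : Fin n, (x0 (n+1) 0 - q0 (n+1) * x0 (n+1) j.succ))
        * (∏ i : Fin n, ((x0 (n+1) 0 - x0 (n+1) i.succ)
            / (x0 (n+1) 0 - q0 (n+1) * x0 (n+1) i.succ)))
        = ∏ i : Fin n, (x0 (n+1) 0 - x0 (n+1) i.succ) := by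
      rw [← Finset.prod_mul_distrib]
      refine Finset.prod_congr rfl fun i _ => ?_
      rw [mul_comm, div_mul_cancel₀ _ (x0_sub_q_x0_ne _ _ _)]
    rw [hPq, hAlt, hP1, comb hα]
    have hL : ((∏ j : Fin n, (x0 (n+1) 0 - q0 (n+1) * x0 (n+1) j.succ)) * sh n (Delta0 n (q0 n)))
        * (x0 (n+1) 0 ^ α 0 *
          ((∏ i : Fin n, ((x0 (n+1) 0 - x0 (n+1) i.succ)
            / (x0 (n+1) 0 - q0 (n+1) * x0 (n+1) i.succ))) * (MatP n α).det))
        = ((∏ j : Fin n, (x0 (n+1) 0 - q0 (n+1) * x0 (n+1) j.succ))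
            * (∏ i : Fin n, ((x0 (n+1) 0 - x0 (n+1) i.succ)
              / (x0 (n+1) 0 - q0 (n+1) * x0 (n+1) i.succ))))
          * (sh n (Delta0 n (q0 n)) * (x0 (n+1) 0 ^ α 0 * (MatP n α).det)) := by
      ring
    rw [hL, hrat, detP_expand n α hα, Finset.mul_sum, Finset.mul_sum, Finset.mul_sum]
    refine Finset.sum_congr rfl fun β hβ => ?_
    have hβ2 : ∀ k l : Fin n, k < l → β l < β k := (Finset.mem_filter.mp hβ).2
    have hih := ih β hβ2
    have h2 : sh n (Delta0 n (q0 n)) * sh n (Alt n β)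
        = sh n (Delta0 n 1)
          * sh n (∑ᶠ T' : {T' : GTP n // T'.Strict ∧ T'.TopRow β}, wt n T'.1) := by
      rw [← map_mul, ← map_mul, hih]
    linear_combination ((∏ i : Fin n, (x0 (n+1) 0 - x0 (n+1) i.succ))
      * ((∏ k : Fin n, ff n α k (β k))
        * x0 (n+1) 0 ^ ((∑ j : Fin (n+1), α j) - ∑ k : Fin n, β k))) * h2

end main

/-- **Tokuyama's theorem.** For a weakly decreasing tuple `λ` of nonnegative
integers of length `n`,
`∏_{i<j}(x_i - q x_j) ⬝ s_λ(x) = Σ_{T ∈ SGT(λ+ρ_n)} (1-q)^{z(T)} (-q)^{l(T)} x^{m(T)}`. -/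
theorem tokuyama (n : ℕ) (lam : Fin n → ℕ)
    (hlam : ∀ i j : Fin n, i ≤ j → lam j ≤ lam i) :
    Delta0 n (q0 n) * Schur0 n lam =
      ∑ᶠ T : {T : GTP n // T.Strict ∧ T.TopRow (fun i => lam i + rho n i)},
        (1 - q0 n) ^ zcount T.1 * (-q0 n) ^ lcount T.1 * xm0 n T.1 := by
  have hα : ∀ k l : Fin n, k < l → lam l + rho n l < lam k + rho n k := by
    intro k l hkl
    have h1 : lam l ≤ lam k := hlam k l (le_of_lt hkl)
    have h2 : rho n l < rho n k := by
      rw [rho, rho]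
      have := l.isLt
      have := k.isLt
      have : (k:ℕ) < (l:ℕ) := hkl
      omega
    omega
  have hmain := main_ind n (fun i => lam i + rho n i) hα
  have hs : Delta0 n 1 * Schur0 n lam = Alt n (fun i => lam i + rho n i) :=
    schur_alt n (fun i => lam i + rho n i)
  have hΔ : Delta0 n 1 ≠ 0 := delta0_one_ne n
  have key : Delta0 n 1 * (Delta0 n (q0 n) * Schur0 n lam)
      = Delta0 n 1 * ∑ᶠ T : {T : GTP n // T.Strict ∧ T.TopRow (fun i => lam i + rho n i)},
          wt n T.1 := by
    calc Delta0 n 1 * (Delta0 n (q0 n) * Schur0 n lam)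
        = Delta0 n (q0 n) * (Delta0 n 1 * Schur0 n lam) := by ring
      _ = Delta0 n (q0 n) * Alt n (fun i => lam i + rho n i) := by rw [hs]
      _ = _ := hmain
  have := mul_left_cancel₀ hΔ key
  rw [this]
  rfl

end
end
end

section
/- Let κ = (κ_1,…,κ_m) be a weakly decreasing tuple of nonnegative integers of length m > 2 and κ' = (κ_2,…,κ_m). Then, in F, P_κ(x;t) = Σ_{i=1}^m x_i^{κ_1} · ∏_{1≤a≤m, a≠i} (x_i − t x_a)/(x_i − x_a) · ζ_i(P_{κ'}(x;t)), where P_{κ'}(x;t) is the Hall–Littlewood polynomial in the variables x_1,…,x_{m−1}. -/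
open MvPolynomial Finset

noncomputable section

abbrev Rr : Type := MvPolynomial (Fin 2 ⊕ ℕ) ℚ

abbrev F : Type := FractionRing Rr

/-- The variable `q`. -/
def q : F := algebraMap Rr F (X (Sum.inl 0))

/-- The variable `t`. -/
def t : F := algebraMap Rr F (X (Sum.inl 1))

/-- `x k` is the variable `x_{k+1}` of the paper (0-indexed). -/
def x (k : ℕ) : F := algebraMap Rr F (X (Sum.inr k))

/-- Substitution endomorphism of `F` induced by an injective map of variables. -/
def subF (g : Fin 2 ⊕ ℕ → Fin 2 ⊕ ℕ) (hg : Function.Injective g) : F →+* F :=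
  IsFractionRing.lift (g := (algebraMap Rr F).comp (rename g).toRingHom)
    (by
      rw [RingHom.coe_comp]
      exact (IsFractionRing.injective Rr F).comp (rename_injective g hg))

def permNat (n : ℕ) (σ : Equiv.Perm (Fin n)) : ℕ → ℕ :=
  fun k => if h : k < n then (σ ⟨k, h⟩ : ℕ) else k

lemma permNat_inj (n : ℕ) (σ : Equiv.Perm (Fin n)) : Function.Injective (permNat n σ) := by
  intro a b hab
  unfold permNat at hab
  split_ifs at hab with h1 h2 h2
  · have := σ.injective (Fin.val_injective hab)
    exact congrArg Fin.val this
  · have := (σ ⟨a, h1⟩).isLt; omega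
  · have := (σ ⟨b, h2⟩).isLt; omega
  · exact hab

/-- The action of a permutation `σ ∈ S_n` on `F`, permuting `x_1, …, x_n`. -/
def pact (n : ℕ) (σ : Equiv.Perm (Fin n)) : F →+* F :=
  subF (Sum.map id (permNat n σ)) (Function.injective_id.sumMap (permNat_inj n σ))

def shiftNat (i : ℕ) : ℕ → ℕ := fun k => if k < i then k else k + 1

lemma shiftNat_inj (i : ℕ) : Function.Injective (shiftNat i) := by
  intro a b; unfold shiftNat; split_ifs <;> omega

/-- `zeta i` is the endomorphism `ζ_{i+1}` of the paper: it fixes `q`, `t` and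
`x k` for `k < i`, and sends `x k` to `x (k+1)` for `k ≥ i` (0-indexed). -/
def zeta (i : ℕ) : F →+* F :=
  subF (Sum.map id (shiftNat i)) (Function.injective_id.sumMap (shiftNat_inj i))

/-- `zetaP i j` is `ζ_{i+1,j+1}` of the paper. -/
def zetaP (i j : ℕ) : F →+* F := (zeta (max i j)).comp (zeta (min i j))

/-- The Hall–Littlewood polynomial `P_λ(x; t)` in `n` variables. -/
def HL (n : ℕ) (lam : Fin n → ℕ) : F :=
  ∑ σ : Equiv.Perm (Fin n), pact n σ
    ((∏ i : Fin n, x i.val ^ lam i) *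
      ∏ i : Fin n, ∏ j ∈ Finset.Ioi i, (x i.val - t * x j.val) / (x i.val - x j.val))

/-- The deformed Weyl denominator `Δ_n(c) = ∏_{i<j} (x_i - c x_j)`. -/
def DeltaQ (n : ℕ) (c : F) : F := ∏ i : Fin n, ∏ j ∈ Finset.Ioi i, (x i.val - c * x j.val)

/-- The Schur polynomial `s_λ(x) = Σ_σ σ(x^{λ+ρ}/Δ_n)`. -/
def Schur (n : ℕ) (lam : Fin n → ℕ) : F :=
  ∑ σ : Equiv.Perm (Fin n), pact n σ
    ((∏ i : Fin n, x i.val ^ (lam i + rho n i)) / DeltaQ n 1)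

/-- `GT2 n α` is the set of tuples `μ` of length `n` with `α_{i+1} ≤ μ_i ≤ α_i`. -/
def GT2 (n : ℕ) (α : Fin (n+1) → ℕ) : Finset (Fin n → ℕ) :=
  Fintype.piFinset (fun i => Finset.Icc (α i.succ) (α i.castSucc))

def GLw (y a : ℕ) : F := if y = a then -q else if y + 1 = a then t else 0

def GRw (y b : ℕ) : F := if y = b then 1 else if y = b + 1 then -q * t else 0

/-- `w(μ_j)` where `a1 = α_j`, `a2 = α_{j+1}`, `m = μ_j`. -/
def wgt (a1 a2 m : ℕ) : F :=
  (if m = a1 ∨ m = a2 then 0 else (1 - q) * (1 - t)) + GLw m a1 + GRw m a2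

/-- The tridiagonal determinant `M(α; μ)`. -/
def Mdet (n : ℕ) (α : Fin (n+1) → ℕ) (μ : Fin n → ℕ) : F :=
  Matrix.det (Matrix.of fun i j : Fin n =>
    if i = j then wgt (α i.castSucc) (α i.succ) (μ i)
    else if (i : ℕ) + 1 = (j : ℕ) then 1
    else if (j : ℕ) + 1 = (i : ℕ) then GRw (μ j) (α i.castSucc) * GLw (μ i) (α i.castSucc)
    else 0)

def tot {n : ℕ} (f : Fin n → ℕ) : ℕ := ∑ i, f i


namespace HLaux

/-- The one-pair ratio `(x_a - t x_b)/(x_a - x_b)`. -/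
def R (a b : ℕ) : F := (x a - t * x b) / (x a - x b)

lemma subF_algebraMap (g : Fin 2 ⊕ ℕ → Fin 2 ⊕ ℕ) (hg : Function.Injective g) (r : Rr) :
    subF g hg (algebraMap Rr F r) = algebraMap Rr F (rename g r) := by
  unfold subF
  rw [IsFractionRing.lift_algebraMap]
  rfl

lemma subF_x (g : Fin 2 ⊕ ℕ → Fin 2 ⊕ ℕ) (hg : Function.Injective g) (k : ℕ) :
    subF g hg (x k) = algebraMap Rr F (X (g (Sum.inr k))) := by
  rw [x, subF_algebraMap, rename_X]

lemma subF_t (g : Fin 2 ⊕ ℕ → Fin 2 ⊕ ℕ) (hg : Function.Injective g)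
    (h : g (Sum.inl 1) = Sum.inl 1) : subF g hg t = t := by
  rw [t, subF_algebraMap, rename_X, h]

lemma pact_t (n : ℕ) (σ : Equiv.Perm (Fin n)) : pact n σ t = t :=
  subF_t _ _ rfl

lemma zeta_t (p : ℕ) : zeta p t = t :=
  subF_t _ _ rfl

lemma pact_x (n : ℕ) (σ : Equiv.Perm (Fin n)) (k : ℕ) (h : k < n) :
    pact n σ (x k) = x (permNat n σ k) := by
  rw [pact, subF_x, x, Sum.map_inr]

lemma zeta_x (p k : ℕ) : zeta p (x k) = x (shiftNat p k) := by
  rw [zeta, subF_x, x, Sum.map_inr]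

lemma permNat_val (n : ℕ) (σ : Equiv.Perm (Fin n)) (i : Fin n) :
    permNat n σ i.val = (σ i).val := by
  simp [permNat, i.isLt]

lemma eval_big (n : ℕ) (lam : Fin n → ℕ) (f : F →+* F) (g : ℕ → ℕ)
    (hft : f t = t) (hfx : ∀ k, k < n → f (x k) = x (g k)) :
    f ((∏ i : Fin n, x i.val ^ lam i) *
        ∏ i : Fin n, ∏ j ∈ Finset.Ioi i, (x i.val - t * x j.val) / (x i.val - x j.val)) =
      (∏ i : Fin n, x (g i.val) ^ lam i) *
        ∏ i : Fin n, ∏ j ∈ Finset.Ioi i, R (g i.val) (g j.val) := by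
  rw [map_mul, map_prod, map_prod]
  congr 1
  · exact Finset.prod_congr rfl fun i _ => by rw [map_pow, hfx _ i.isLt]
  · refine Finset.prod_congr rfl fun i _ => ?_
    rw [map_prod]
    refine Finset.prod_congr rfl fun j _ => ?_
    rw [map_div₀, map_sub, map_sub, map_mul, hft, hfx _ i.isLt, hfx _ j.isLt, R]

/-- The Hall–Littlewood summand as a function of the variable assignment. -/
def G' (n : ℕ) (lam : Fin n → ℕ) (φ : Fin n → ℕ) : F :=
  (∏ k : Fin n, x (φ k) ^ lam k) * ∏ k : Fin n, ∏ l ∈ Finset.Ioi k, R (φ k) (φ l)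

lemma HL_eq (n : ℕ) (lam : Fin n → ℕ) :
    HL n lam = ∑ σ : Equiv.Perm (Fin n), G' n lam (fun i => (σ i : ℕ)) := by
  rw [HL]
  refine Finset.sum_congr rfl fun σ _ => ?_
  rw [eval_big n lam (pact n σ) (permNat n σ) (pact_t n σ) (fun k h => pact_x n σ k h)]
  unfold G'
  simp only [permNat_val]

lemma zeta_HL (p n : ℕ) (lam : Fin n → ℕ) :
    zeta p (HL n lam) =
      ∑ σ : Equiv.Perm (Fin n), G' n lam (fun i => shiftNat p (σ i : ℕ)) := by
  rw [HL, map_sum]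
  refine Finset.sum_congr rfl fun σ _ => ?_
  rw [← RingHom.comp_apply]
  rw [eval_big n lam ((zeta p).comp (pact n σ)) (fun k => shiftNat p (permNat n σ k))
    (by rw [RingHom.comp_apply, pact_t, zeta_t])
    (fun k h => by rw [RingHom.comp_apply, pact_x n σ k h, zeta_x])]
  unfold G'
  simp only [permNat_val]

lemma G'_split (n : ℕ) (lam : Fin (n+1) → ℕ) (φ : Fin (n+1) → ℕ) :
    G' (n+1) lam φ =
      x (φ 0) ^ lam 0 * (∏ k : Fin n, R (φ 0) (φ k.succ)) *
        G' n (fun j => lam j.succ) (fun k => φ k.succ) := by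
  unfold G'
  rw [Fin.prod_univ_succ (fun i => x (φ i) ^ lam i),
      Fin.prod_univ_succ (fun i => ∏ l ∈ Finset.Ioi i, R (φ i) (φ l)),
      Fin.prod_Ioi_zero]
  rw [Finset.prod_congr rfl fun (k : Fin n) (_ : k ∈ Finset.univ) =>
    Fin.prod_Ioi_succ (a := k) (f := fun l => R (φ k.succ) (φ l))]
  dsimp only
  ring

/-- The assignment `k ↦ (swap 0 p) k.succ` used by `decomposeFin`. -/
def ep (n : ℕ) (p : Fin (n+1)) (k : Fin n) : ℕ := ((Equiv.swap 0 p) k.succ : ℕ)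

lemma ep_eq (n : ℕ) (p : Fin (n+1)) (k : Fin n) :
    ep n p k = if k.val + 1 = p.val then 0 else k.val + 1 := by
  unfold ep
  rw [Equiv.swap_apply_def, if_neg (Fin.succ_ne_zero k)]
  by_cases h : k.succ = p
  · have hv : p.val = k.val + 1 := by rw [← h, Fin.val_succ]
    rw [if_pos h, if_pos hv.symm, Fin.val_zero]
  · have hv : k.val + 1 ≠ p.val := fun hc => h (Fin.ext (by rw [Fin.val_succ]; exact hc))
    rw [if_neg h, if_neg hv, Fin.val_succ]

lemma ep_inj (n : ℕ) (p : Fin (n+1)) : Function.Injective (ep n p) := by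
  intro a b h
  exact Fin.succ_injective _ ((Equiv.swap 0 p).injective (Fin.val_injective h))

lemma sh_inj (n : ℕ) (p : Fin (n+1)) :
    Function.Injective (fun k : Fin n => shiftNat p.val k.val) :=
  fun a b h => Fin.val_injective (shiftNat_inj p.val h)

lemma range_ep (n : ℕ) (p : Fin (n+1)) :
    Set.range (ep n p) = Set.range (fun k : Fin n => shiftNat p.val k.val) := by
  have hp := p.isLt
  ext a
  simp only [Set.mem_range, ep_eq, shiftNat]
  constructor
  · rintro ⟨k, hk⟩
    have hk2 := k.isLt
    split_ifs at hk with h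
    · exact ⟨⟨0, k.pos⟩, by simp only [Fin.val_mk]; split_ifs <;> omega⟩
    · by_cases h2 : a < p.val
      · exact ⟨⟨a, by omega⟩, by simp only [Fin.val_mk]; split_ifs <;> omega⟩
      · exact ⟨k, by split_ifs <;> omega⟩
  · rintro ⟨k, hk⟩
    have hk2 := k.isLt
    split_ifs at hk with h
    · by_cases h2 : a = 0
      · exact ⟨⟨p.val - 1, by omega⟩, by simp only [Fin.val_mk]; split_ifs <;> omega⟩
      · exact ⟨⟨a - 1, by omega⟩, by simp only [Fin.val_mk]; split_ifs <;> omega⟩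
    · exact ⟨k, by split_ifs <;> omega⟩

lemma sum_perm_comp (n : ℕ) (G : (Fin n → ℕ) → F) (f g : Fin n → ℕ)
    (hf : Function.Injective f) (hg : Function.Injective g)
    (hr : Set.range f = Set.range g) :
    ∑ τ : Equiv.Perm (Fin n), G (f ∘ τ) = ∑ τ : Equiv.Perm (Fin n), G (g ∘ τ) := by
  obtain ⟨π, hπ⟩ : ∃ π : Equiv.Perm (Fin n), g ∘ π = f := by
    refine ⟨(Equiv.ofInjective f hf).trans ((Equiv.setCongr hr).trans
      (Equiv.ofInjective g hg).symm), ?_⟩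
    funext k
    simp only [Function.comp_apply, Equiv.trans_apply, Equiv.ofInjective_apply]
    exact Equiv.apply_ofInjective_symm hg _
  calc ∑ τ : Equiv.Perm (Fin n), G (f ∘ τ)
      = ∑ τ : Equiv.Perm (Fin n), G (g ∘ ⇑(π * τ)) := by
        refine Finset.sum_congr rfl fun τ _ => ?_
        congr 1
        funext k
        rw [← hπ]
        rfl
    _ = ∑ τ : Equiv.Perm (Fin n), G (g ∘ τ) :=
        Equiv.sum_comp (Equiv.mulLeft π) (fun ρ => G (g ∘ ⇑ρ))

lemma prod_ep_erase (n : ℕ) (p : Fin (n+1)) (h : ℕ → F) :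
    ∏ k : Fin n, h (ep n p k) = ∏ a ∈ (Finset.range (n+1)).erase p.val, h a := by
  refine Finset.prod_bij (fun k _ => ep n p k) ?_ ?_ ?_ ?_
  · intro k _
    have := k.isLt; have := p.isLt
    simp only [Finset.mem_erase, Finset.mem_range, ep_eq]
    split_ifs <;> omega
  · intro a _ b _ hab
    exact ep_inj n p hab
  · intro b hb
    rw [Finset.mem_erase, Finset.mem_range] at hb
    by_cases h2 : b = 0
    · have hp : 0 < p.val := by omega
      exact ⟨⟨p.val - 1, by omega⟩, Finset.mem_univ _,
        by simp only [ep_eq, Fin.val_mk]; split_ifs <;> omega⟩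
    · exact ⟨⟨b - 1, by omega⟩, Finset.mem_univ _,
        by simp only [ep_eq, Fin.val_mk]; split_ifs <;> omega⟩
  · intro k _
    rfl

end HLaux

/-- **Lemma (recursive expansion, one row).** For a weakly decreasing tuple `κ`
of length `m > 2`,
`P_κ(x;t) = Σ_{i=1}^m x_i^{κ_1} ∏_{a≠i} (x_i - t x_a)/(x_i - x_a) ζ_i(P_{κ'}(x;t))`
where `κ' = (κ_2, …, κ_m)`. -/
theorem hall_littlewood_one_row_expansion (m : ℕ) (κ : Fin (m + 3) → ℕ)
    (hκ : ∀ i j : Fin (m + 3), i ≤ j → κ j ≤ κ i) :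
    HL (m + 3) κ =
      ∑ i ∈ Finset.range (m + 3),
        x i ^ κ 0 *
        (∏ a ∈ (Finset.range (m + 3)).erase i, (x i - t * x a) / (x i - x a)) *
        zeta i (HL (m + 2) (fun j => κ j.succ)) := by
  classical
  rw [HLaux.HL_eq]
  rw [← Equiv.sum_comp (Equiv.Perm.decomposeFin).symm
    (fun σ : Equiv.Perm (Fin (m+3)) => HLaux.G' (m+3) κ (fun i => (σ i : ℕ)))]
  rw [Fintype.sum_prod_type]
  rw [← Fin.sum_univ_eq_sum_range (fun i => x i ^ κ 0 *
    (∏ a ∈ (Finset.range (m+3)).erase i, (x i - t * x a) / (x i - x a)) *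
    zeta i (HL (m+2) (fun j => κ j.succ))) (m+3)]
  refine Finset.sum_congr rfl fun p _ => ?_
  have hterm : ∀ τ : Equiv.Perm (Fin (m+2)),
      HLaux.G' (m+3) κ (fun i => ((Equiv.Perm.decomposeFin.symm (p, τ)) i : ℕ)) =
      x p.val ^ κ 0 * (∏ k : Fin (m+2), HLaux.R p.val (HLaux.ep (m+2) p (τ k))) *
        HLaux.G' (m+2) (fun j => κ j.succ) ((HLaux.ep (m+2) p) ∘ τ) := by
    intro τ
    rw [HLaux.G'_split (m+2) κ (fun i => ((Equiv.Perm.decomposeFin.symm (p, τ)) i : ℕ))]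
    have h0 : ((Equiv.Perm.decomposeFin.symm (p, τ)) 0 : ℕ) = p.val := by
      rw [Equiv.Perm.decomposeFin_symm_apply_zero]
    have hs : ∀ k : Fin (m+2), ((Equiv.Perm.decomposeFin.symm (p, τ)) k.succ : ℕ)
        = HLaux.ep (m+2) p (τ k) := fun k => by
      rw [Equiv.Perm.decomposeFin_symm_apply_succ]; rfl
    simp only [h0, hs]
    rfl
  rw [Finset.sum_congr rfl fun τ _ => hterm τ]
  have hC : ∀ τ : Equiv.Perm (Fin (m+2)),
      (∏ k : Fin (m+2), HLaux.R p.val (HLaux.ep (m+2) p (τ k))) =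
      ∏ a ∈ (Finset.range (m+3)).erase p.val, (x p.val - t * x a) / (x p.val - x a) := by
    intro τ
    rw [Equiv.prod_comp τ (fun k => HLaux.R p.val (HLaux.ep (m+2) p k))]
    rw [HLaux.prod_ep_erase (m+2) p (fun a => HLaux.R p.val a)]
    exact Finset.prod_congr rfl fun a _ => rfl
  rw [Finset.sum_congr rfl fun τ _ => by rw [hC τ]]
  rw [← Finset.mul_sum]
  congr 1
  rw [HLaux.sum_perm_comp (m+2) (HLaux.G' (m+2) (fun j => κ j.succ))
    (HLaux.ep (m+2) p) (fun k => shiftNat p.val k.val)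
    (HLaux.ep_inj (m+2) p) (HLaux.sh_inj (m+2) p) (HLaux.range_ep (m+2) p)]
  rw [HLaux.zeta_HL p.val (m+2) (fun j => κ j.succ)]
  rfl


end
end

section
/- Let κ = (κ_1,…,κ_m) be a weakly decreasing tuple of nonnegative integers of length m > 2 and κ'' = (κ_3,…,κ_m). Then, in F, P_κ(x;t) = Σ_{i=1}^m Σ_{1≤j≤m, j≠i} x_i^{κ_1} x_j^{κ_2} · ∏_{1≤a≤m, a≠i}(x_i − t x_a)/(x_i − x_a) · ∏_{1≤a≤m, a≠i,j}(x_j − t x_a)/(x_j − x_a) · ζ_{i,j}(P_{κ''}(x;t)), where P_{κ''}(x;t) is the Hall–Littlewood polynomial in the variables x_1,…,x_{m−2}. -/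
open MvPolynomial Finset

noncomputable section

/-! ### Auxiliary machinery for the proof -/

def EE (n : ℕ) (u : Fin n → ℕ) (lam : Fin n → ℕ) : F :=
  (∏ i : Fin n, x (u i) ^ lam i) *
    ∏ i : Fin n, ∏ j ∈ Finset.Ioi i, (x (u i) - t * x (u j)) / (x (u i) - x (u j))

lemma subF_algebraMap (g : Fin 2 ⊕ ℕ → Fin 2 ⊕ ℕ) (hg : Function.Injective g) (p : Rr) :
    subF g hg (algebraMap Rr F p) = algebraMap Rr F (rename g p) := by
  unfold subF
  rw [IsFractionRing.lift_algebraMap]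
  rfl

lemma subF_x (g : Fin 2 ⊕ ℕ → Fin 2 ⊕ ℕ) (hg : Function.Injective g) (k : ℕ) :
    subF g hg (x k) = algebraMap Rr F (X (g (Sum.inr k))) := by
  rw [x, subF_algebraMap, rename_X]

lemma subF_t (g : Fin 2 ⊕ ℕ → Fin 2 ⊕ ℕ) (hg : Function.Injective g)
    (h : g (Sum.inl 1) = Sum.inl 1) : subF g hg t = t := by
  rw [t, subF_algebraMap, rename_X, h]

lemma pact_x (n : ℕ) (σ : Equiv.Perm (Fin n)) (k : Fin n) :
    pact n σ (x k.val) = x (σ k : ℕ) := by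
  rw [pact, subF_x]
  simp [permNat, x, k.isLt]

lemma pact_t (n : ℕ) (σ : Equiv.Perm (Fin n)) : pact n σ t = t := by
  rw [pact, subF_t]; rfl

lemma zeta_x (i k : ℕ) : zeta i (x k) = x (shiftNat i k) := by
  rw [zeta, subF_x]; rfl

lemma zeta_t (i : ℕ) : zeta i t = t := by
  rw [zeta, subF_t]; rfl

lemma zetaP_x (i j k : ℕ) :
    zetaP i j (x k) = x (shiftNat (max i j) (shiftNat (min i j) k)) := by
  rw [zetaP, RingHom.comp_apply, zeta_x, zeta_x]

lemma zetaP_t (i j : ℕ) : zetaP i j t = t := by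
  rw [zetaP, RingHom.comp_apply, zeta_t, zeta_t]

lemma HL_eq_sum_EE (n : ℕ) (lam : Fin n → ℕ) :
    HL n lam = ∑ σ : Equiv.Perm (Fin n), EE n (fun k => (σ k : ℕ)) lam := by
  unfold HL EE
  refine Finset.sum_congr rfl fun σ _ => ?_
  simp only [map_mul, map_prod, map_pow, map_div₀, map_sub, pact_x, pact_t]

lemma zetaP_EE (i j : ℕ) (n : ℕ) (u lam : Fin n → ℕ) :
    zetaP i j (EE n u lam) =
      EE n (fun k => shiftNat (max i j) (shiftNat (min i j) (u k))) lam := by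
  unfold EE
  simp only [map_mul, map_prod, map_pow, map_div₀, map_sub, zetaP_x, zetaP_t]

lemma zetaP_HL (i j : ℕ) (n : ℕ) (lam : Fin n → ℕ) :
    zetaP i j (HL n lam) =
      ∑ ρ : Equiv.Perm (Fin n),
        EE n (fun k => shiftNat (max i j) (shiftNat (min i j) (ρ k : ℕ))) lam := by
  rw [HL_eq_sum_EE, map_sum]
  exact Finset.sum_congr rfl fun ρ _ => zetaP_EE i j n _ lam

lemma EE_peel (n : ℕ) (u lam : Fin (n + 1) → ℕ) :
    EE (n + 1) u lam =
      x (u 0) ^ lam 0 *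
        (∏ j ∈ Finset.Ioi (0 : Fin (n + 1)), (x (u 0) - t * x (u j)) / (x (u 0) - x (u j))) *
        EE n (fun k => u k.succ) (fun k => lam k.succ) := by
  unfold EE
  rw [Fin.prod_univ_succ, Fin.prod_univ_succ (f := fun i =>
    ∏ j ∈ Finset.Ioi i, (x (u i) - t * x (u j)) / (x (u i) - x (u j)))]
  rw [Fin.prod_Ioi_zero]
  simp only [Fin.prod_Ioi_succ]
  ring

lemma prod_comp_image {n : ℕ} (v : Fin n → ℕ) (hv : Function.Injective v) (f : ℕ → F) :
    ∏ k : Fin n, f (v k) = ∏ a ∈ Finset.image v Finset.univ, f a :=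
  (Finset.prod_image (fun a _ b _ h => hv h)).symm

lemma row_prod {n : ℕ} (u : Fin (n + 1) → ℕ)
    (hu : Function.Injective (fun k : Fin n => u k.succ)) (f : ℕ → F) :
    ∏ j ∈ Finset.Ioi (0 : Fin (n + 1)), f (u j)
      = ∏ a ∈ Finset.image (fun k : Fin n => u k.succ) Finset.univ, f a := by
  rw [Fin.prod_Ioi_zero, prod_comp_image _ hu]

lemma image_succ {N : ℕ} (σ : Equiv.Perm (Fin (N + 1))) :
    Finset.image (fun k : Fin N => (σ k.succ : ℕ)) Finset.univ
      = (Finset.range (N + 1)).erase (σ 0 : ℕ) := by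
  ext a
  simp only [Finset.mem_image, Finset.mem_univ, true_and, Finset.mem_erase, Finset.mem_range]
  constructor
  · rintro ⟨k, rfl⟩
    exact ⟨fun h => Fin.succ_ne_zero k (σ.injective (Fin.val_injective h)), (σ k.succ).isLt⟩
  · rintro ⟨hne, hlt⟩
    have hb : σ.symm ⟨a, hlt⟩ ≠ 0 := by
      intro h0
      apply hne
      have h1 : σ (σ.symm ⟨a, hlt⟩) = ⟨a, hlt⟩ := σ.apply_symm_apply _
      rw [h0] at h1
      rw [h1]
    refine ⟨(σ.symm ⟨a, hlt⟩).pred hb, ?_⟩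
    rw [Fin.succ_pred, σ.apply_symm_apply]

lemma image_succ2 {N : ℕ} (σ : Equiv.Perm (Fin (N + 2))) :
    Finset.image (fun k : Fin N => (σ k.succ.succ : ℕ)) Finset.univ
      = ((Finset.range (N + 2)).erase (σ 0 : ℕ)).erase (σ 1 : ℕ) := by
  ext a
  simp only [Finset.mem_image, Finset.mem_univ, true_and, Finset.mem_erase, Finset.mem_range]
  constructor
  · rintro ⟨k, rfl⟩
    refine ⟨fun h => ?_, fun h => ?_, (σ k.succ.succ).isLt⟩
    · have hv := congrArg Fin.val (σ.injective (Fin.val_injective h))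
      simp [Fin.val_succ] at hv
    · have hv := congrArg Fin.val (σ.injective (Fin.val_injective h))
      simp [Fin.val_succ] at hv
  · rintro ⟨hne1, hne0, hlt⟩
    have hb0 : σ.symm ⟨a, hlt⟩ ≠ 0 := by
      intro h0
      apply hne0
      have h1 : σ (σ.symm ⟨a, hlt⟩) = ⟨a, hlt⟩ := σ.apply_symm_apply _
      rw [h0] at h1; rw [h1]
    have hb1 : σ.symm ⟨a, hlt⟩ ≠ 1 := by
      intro h0
      apply hne1
      have h1 : σ (σ.symm ⟨a, hlt⟩) = ⟨a, hlt⟩ := σ.apply_symm_apply _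
      rw [h0] at h1; rw [h1]
    have hv0 : (σ.symm ⟨a, hlt⟩ : ℕ) ≠ 0 := fun h => hb0 (Fin.ext h)
    have hv1 : (σ.symm ⟨a, hlt⟩ : ℕ) ≠ 1 := fun h => hb1 (Fin.ext (by simp [h]))
    have hvlt := (σ.symm ⟨a, hlt⟩).isLt
    refine ⟨⟨(σ.symm ⟨a, hlt⟩ : ℕ) - 2, by omega⟩, ?_⟩
    have hk : (⟨(σ.symm ⟨a, hlt⟩ : ℕ) - 2, by omega⟩ : Fin N).succ.succ = σ.symm ⟨a, hlt⟩ := by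
      apply Fin.ext
      simp [Fin.val_succ]
      omega
    rw [hk, σ.apply_symm_apply]

lemma image_shift (mm a b : ℕ) (hab : a < b) (hb : b < mm + 2) :
    Finset.image (fun k : Fin mm => shiftNat b (shiftNat a k)) Finset.univ
      = ((Finset.range (mm + 2)).erase a).erase b := by
  ext c
  simp only [Finset.mem_image, Finset.mem_univ, true_and, Finset.mem_erase, Finset.mem_range,
    shiftNat]
  constructor
  · rintro ⟨k, rfl⟩
    have := k.isLt
    split_ifs <;> omega
  · rintro ⟨hcb, hca, hc⟩
    by_cases h1 : c < a
    · exact ⟨⟨c, by omega⟩, by simp only [Fin.val_mk]; split_ifs <;> omega⟩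
    · by_cases h2 : c < b
      · exact ⟨⟨c - 1, by omega⟩, by simp only [Fin.val_mk]; split_ifs <;> omega⟩
      · exact ⟨⟨c - 2, by omega⟩, by simp only [Fin.val_mk]; split_ifs <;> omega⟩

lemma sum_perm_EE {n : ℕ} (u v : Fin n → ℕ) (hu : Function.Injective u)
    (hv : Function.Injective v)
    (himg : Finset.image u Finset.univ = Finset.image v Finset.univ)
    (lam : Fin n → ℕ) :
    ∑ ρ : Equiv.Perm (Fin n), EE n (fun k => u (ρ k)) lam
      = ∑ ρ : Equiv.Perm (Fin n), EE n (fun k => v (ρ k)) lam := by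
  have hmem : ∀ k, v k ∈ Finset.image u Finset.univ := by
    intro k; rw [himg]; exact Finset.mem_image_of_mem _ (Finset.mem_univ k)
  choose g hgmem hg using fun k => Finset.mem_image.mp (hmem k)
  have ginj : Function.Injective g := fun a b h => hv (by rw [← hg a, ← hg b, h])
  let π : Equiv.Perm (Fin n) := Equiv.ofBijective g (Finite.injective_iff_bijective.mp ginj)
  refine (Fintype.sum_bijective (fun ρ => π * ρ) (Group.mulLeft_bijective π) _ _
    fun ρ => ?_).symm
  congr 1
  funext k
  show v (ρ k) = u ((π * ρ) k)
  rw [Equiv.Perm.mul_apply]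
  exact (hg (ρ k)).symm

lemma EE_two_peel (m : ℕ) (κ : Fin (m + 3) → ℕ) (σ : Equiv.Perm (Fin (m + 3))) :
    EE (m + 3) (fun k => (σ k : ℕ)) κ =
      x (σ 0 : ℕ) ^ κ 0 * x (σ 1 : ℕ) ^ κ 1 *
      (∏ a ∈ (Finset.range (m + 3)).erase (σ 0 : ℕ),
          (x (σ 0 : ℕ) - t * x a) / (x (σ 0 : ℕ) - x a)) *
      (∏ a ∈ ((Finset.range (m + 3)).erase (σ 0 : ℕ)).erase (σ 1 : ℕ),
          (x (σ 1 : ℕ) - t * x a) / (x (σ 1 : ℕ) - x a)) *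
      EE (m + 1) (fun k => (σ k.succ.succ : ℕ)) (fun l => κ l.succ.succ) := by
  have inj1 : Function.Injective (fun k : Fin (m + 2) => ((σ k.succ : ℕ))) :=
    Fin.val_injective.comp (σ.injective.comp (Fin.succ_injective _))
  have inj2 : Function.Injective (fun k : Fin (m + 1) => ((σ k.succ.succ : ℕ))) :=
    Fin.val_injective.comp (σ.injective.comp
      ((Fin.succ_injective _).comp (Fin.succ_injective _)))
  rw [EE_peel, EE_peel]
  rw [row_prod (fun k => (σ k : ℕ)) inj1
    (fun a => (x (σ 0 : ℕ) - t * x a) / (x (σ 0 : ℕ) - x a))]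
  simp only [Fin.succ_zero_eq_one]
  rw [row_prod (fun k => (σ k.succ : ℕ)) inj2
    (fun a => (x (σ 1 : ℕ) - t * x a) / (x (σ 1 : ℕ) - x a))]
  rw [image_succ σ, image_succ2 σ]
  ring

lemma swap_succ_ne {m : ℕ} (i : Fin (m + 3)) (j' : Fin (m + 2)) :
    (Equiv.swap 0 i j'.succ) ≠ i := by
  intro h
  have h2 := (Equiv.swap 0 i).injective (h.trans (Equiv.swap_apply_left 0 i).symm)
  exact Fin.succ_ne_zero j' h2

lemma core (m : ℕ) (lam : Fin (m + 1) → ℕ) (i : Fin (m + 3)) (j' : Fin (m + 2)) :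
    ∑ ρ : Equiv.Perm (Fin (m + 1)),
        EE (m + 1) (fun k => ((Equiv.swap 0 i ((Equiv.swap 0 j' (ρ k).succ).succ)) : ℕ)) lam
      = zetaP (i : ℕ) ((Equiv.swap 0 i j'.succ : Fin (m + 3)) : ℕ) (HL (m + 1) lam) := by
  set jv : Fin (m + 3) := Equiv.swap 0 i j'.succ with hjv
  set σ₁ : Equiv.Perm (Fin (m + 3)) :=
    Equiv.Perm.decomposeFin.symm (i, Equiv.Perm.decomposeFin.symm (j', 1)) with hσ₁
  have hσ0 : σ₁ 0 = i := Equiv.Perm.decomposeFin_symm_apply_zero _ _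
  have hσs1 : σ₁ 1 = jv := by
    rw [hσ₁, Equiv.Perm.decomposeFin_symm_apply_one, Equiv.Perm.decomposeFin_symm_apply_zero]
  have hσk : ∀ k : Fin (m + 1),
      σ₁ k.succ.succ = Equiv.swap 0 i ((Equiv.swap 0 j' k.succ).succ) := by
    intro k
    rw [hσ₁, Equiv.Perm.decomposeFin_symm_apply_succ, Equiv.Perm.decomposeFin_symm_apply_succ]
    rfl
  have hne : (i : ℕ) ≠ (jv : ℕ) := fun h => swap_succ_ne i j' (Fin.val_injective h.symm)
  set a := min (i : ℕ) (jv : ℕ) with ha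
  set b := max (i : ℕ) (jv : ℕ) with hb
  have hab : a < b := min_lt_max.mpr hne
  have hblt : b < (m + 1) + 2 := max_lt i.isLt jv.isLt
  set U₁ : Fin (m + 1) → ℕ := fun l => (σ₁ l.succ.succ : ℕ) with hU₁
  set U₂ : Fin (m + 1) → ℕ := fun l => shiftNat b (shiftNat a (l : ℕ)) with hU₂
  have hU₁inj : Function.Injective U₁ :=
    Fin.val_injective.comp (σ₁.injective.comp
      ((Fin.succ_injective _).comp (Fin.succ_injective _)))
  have hU₂inj : Function.Injective U₂ :=
    (shiftNat_inj b).comp ((shiftNat_inj a).comp Fin.val_injective)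
  have himg1 : Finset.image U₁ Finset.univ
      = ((Finset.range (m + 3)).erase (i : ℕ)).erase (jv : ℕ) := by
    have h := image_succ2 σ₁
    rw [hσ0, hσs1] at h
    exact h
  have himg2 : Finset.image U₂ Finset.univ
      = ((Finset.range (m + 3)).erase (i : ℕ)).erase (jv : ℕ) := by
    rw [hU₂, image_shift (m + 1) a b hab hblt]
    rcases lt_or_gt_of_ne hne with h | h
    · rw [ha, hb, min_eq_left h.le, max_eq_right h.le]
    · rw [ha, hb, min_eq_right h.le, max_eq_left h.le, Finset.erase_right_comm]
  have key : ∑ ρ : Equiv.Perm (Fin (m + 1)), EE (m + 1) (fun k => U₁ (ρ k)) lam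
      = ∑ ρ : Equiv.Perm (Fin (m + 1)), EE (m + 1) (fun k => U₂ (ρ k)) lam :=
    sum_perm_EE U₁ U₂ hU₁inj hU₂inj (himg1.trans himg2.symm) lam
  calc ∑ ρ : Equiv.Perm (Fin (m + 1)),
        EE (m + 1) (fun k => ((Equiv.swap 0 i ((Equiv.swap 0 j' (ρ k).succ).succ)) : ℕ)) lam
      = ∑ ρ : Equiv.Perm (Fin (m + 1)), EE (m + 1) (fun k => U₁ (ρ k)) lam := by
        refine Finset.sum_congr rfl fun ρ _ => ?_
        congr 1
        funext k
        rw [hU₁]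
        simp only []
        rw [hσk]
    _ = ∑ ρ : Equiv.Perm (Fin (m + 1)), EE (m + 1) (fun k => U₂ (ρ k)) lam := key
    _ = zetaP (i : ℕ) (jv : ℕ) (HL (m + 1) lam) := by
        rw [zetaP_HL]

/-- **Lemma (recursive expansion, two rows).** For a weakly decreasing tuple `κ`
of length `m > 2`, with `κ'' = (κ_3, …, κ_m)`:
`P_κ(x;t) = Σ_{i≠j} x_i^{κ_1} x_j^{κ_2} ∏_{a≠i}(x_i-t x_a)/(x_i-x_a)
  ∏_{a≠i,j}(x_j-t x_a)/(x_j-x_a) ζ_{i,j}(P_{κ''}(x;t))`. -/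
theorem hall_littlewood_two_row_expansion (m : ℕ) (κ : Fin (m + 3) → ℕ)
    (hκ : ∀ i j : Fin (m + 3), i ≤ j → κ j ≤ κ i) :
    HL (m + 3) κ =
      ∑ i ∈ Finset.range (m + 3), ∑ j ∈ (Finset.range (m + 3)).erase i,
        x i ^ κ 0 * x j ^ κ 1 *
        (∏ a ∈ (Finset.range (m + 3)).erase i, (x i - t * x a) / (x i - x a)) *
        (∏ a ∈ ((Finset.range (m + 3)).erase i).erase j, (x j - t * x a) / (x j - x a)) *
        zetaP i j (HL (m + 1) (fun l => κ l.succ.succ)) := by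
  rw [HL_eq_sum_EE]
  rw [Finset.sum_congr rfl (fun σ _ => EE_two_peel m κ σ)]
  rw [← Equiv.sum_comp Equiv.Perm.decomposeFin.symm]
  rw [Fintype.sum_prod_type]
  refine Finset.sum_bij (fun (i : Fin (m + 3)) _ => (i : ℕ)) ?_ ?_ ?_ ?_
  · intro i _
    exact Finset.mem_range.mpr i.isLt
  · intro i _ i2 _ h
    exact Fin.val_injective h
  · intro b hb
    exact ⟨⟨b, Finset.mem_range.mp hb⟩, Finset.mem_univ _, rfl⟩
  · intro i _
    rw [← Equiv.sum_comp Equiv.Perm.decomposeFin.symm]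
    rw [Fintype.sum_prod_type]
    refine Finset.sum_bij
      (fun (j' : Fin (m + 2)) _ => ((Equiv.swap 0 i j'.succ : Fin (m + 3)) : ℕ)) ?_ ?_ ?_ ?_
    · intro j' _
      exact Finset.mem_erase.mpr ⟨fun h => swap_succ_ne i j' (Fin.val_injective h),
        Finset.mem_range.mpr (Equiv.swap 0 i j'.succ).isLt⟩
    · intro j1 _ j2 _ h
      exact (Fin.succ_injective _) ((Equiv.swap 0 i).injective (Fin.val_injective h))
    · intro b hb
      obtain ⟨hbne, hbr⟩ := Finset.mem_erase.mp hb
      have hblt := Finset.mem_range.mp hbr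
      have hc : Equiv.swap 0 i ⟨b, hblt⟩ ≠ 0 := by
        intro h
        apply hbne
        have h3 := congrArg (Equiv.swap 0 i) h
        rw [Equiv.swap_apply_self, Equiv.swap_apply_left] at h3
        exact congrArg Fin.val h3
      refine ⟨(Equiv.swap 0 i ⟨b, hblt⟩).pred hc, Finset.mem_univ _, ?_⟩
      show ((Equiv.swap 0 i (((Equiv.swap 0 i ⟨b, hblt⟩).pred hc).succ) : Fin (m + 3)) : ℕ) = b
      rw [Fin.succ_pred, Equiv.swap_apply_self]
    · intro j' _
      simp only [Equiv.Perm.decomposeFin_symm_apply_zero,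
        Equiv.Perm.decomposeFin_symm_apply_one, Equiv.Perm.decomposeFin_symm_apply_succ]
      rw [← Finset.mul_sum]
      rw [core m (fun l => κ l.succ.succ) i j']

end
end
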